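/- arXiv:2303.01434 — 6 statements merged into one kernel-verified Lean document; each statement's English description precedes it below -/
import Mathlib

section
/- The function f : [0,1] → c₀ defined by mapping an enumeration of the rationals in [0,1] to the standard unit vectors of c₀ and all irrationals to 0 is Riemann-integrable with Riemann integral 0. -/
open Finset MeasureTheory

structure TaggedPartition where
  n : ℕ
  p : ℕ → ℝ
  t : ℕ → ℝ
  n_pos : 0 < n
  p_zero : p 0 = 0
  p_last : p n = 1
  p_mono : ∀ i < n, p i < p (i + 1)
  t_mem : ∀ i < n, t i ∈ Set.Icc (p i) (p (i + 1))

def TaggedPartition.MeshLt (P : TaggedPartition) (δ : ℝ) : Prop :=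
  ∀ i < P.n, P.p (i + 1) - P.p i < δ

noncomputable def riemannSum {X : Type*} [NormedAddCommGroup X] [NormedSpace ℝ X]
    (f : ℝ → X) (P : TaggedPartition) : X :=
  ∑ i ∈ Finset.range P.n, (P.p (i + 1) - P.p i) • f (P.t i)

def HasRiemannIntegral {X : Type*} [NormedAddCommGroup X] [NormedSpace ℝ X]
    (f : ℝ → X) (x : X) : Prop :=
  ∀ ε > (0 : ℝ), ∃ δ > (0 : ℝ), ∀ P : TaggedPartition, P.MeshLt δ →
    ‖x - riemannSum f P‖ < ε

def RiemannIntegrable {X : Type*} [NormedAddCommGroup X] [NormedSpace ℝ X]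
    (f : ℝ → X) : Prop :=
  ∃ x, HasRiemannIntegral f x

def LebesgueProperty (X : Type*) [NormedAddCommGroup X] [NormedSpace ℝ X] : Prop :=
  ∀ f : ℝ → X, RiemannIntegrable f →
    ∀ᵐ t ∂(MeasureTheory.volume.restrict (Set.Icc (0 : ℝ) 1)),
      ContinuousWithinAt f (Set.Icc (0 : ℝ) 1) t

/-- The rationals in `[0,1]`, as a subtype of `ℝ`. -/
def RatIn01 : Type := {t : ℝ // t ∈ Set.Icc (0 : ℝ) 1 ∧ ∃ r : ℚ, (r : ℝ) = t}

theorem c0_unit_vector_function_riemann_integrable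
    (e : ℕ → ZeroAtInftyContinuousMap ℕ ℝ)
    (he : ∀ n m : ℕ, e n m = if m = n then 1 else 0)
    (q : ℕ ≃ RatIn01)
    (f : ℝ → ZeroAtInftyContinuousMap ℕ ℝ)
    (hf_rat : ∀ (t : ℝ) (h : t ∈ Set.Icc (0 : ℝ) 1 ∧ ∃ r : ℚ, (r : ℝ) = t),
      f t = e (q.symm ⟨t, h⟩))
    (hf_irr : ∀ t : ℝ, ¬(t ∈ Set.Icc (0 : ℝ) 1 ∧ ∃ r : ℚ, (r : ℝ) = t) → f t = 0) :
    HasRiemannIntegral f 0 := by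
  intro ε hε
  refine ⟨ε / 3, by positivity, fun P hP => ?_⟩
  have pmono : ∀ j, j ≤ P.n → ∀ i, i ≤ j → P.p i ≤ P.p j := by
    intro j
    induction j with
    | zero =>
      intro _ i hi
      have : i = 0 := Nat.le_zero.mp hi
      subst this; exact le_refl _
    | succ k ih =>
      intro hk i hi
      rcases Nat.lt_or_ge i (k + 1) with h | h
      · exact (ih (by omega) i (by omega)).trans (P.p_mono k (by omega)).le
      · have : i = k + 1 := by omega
        subst this; exact le_refl _
  have pstrict : ∀ i j, i < j → j ≤ P.n → P.p i < P.p j := fun i j hij hj =>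
    lt_of_lt_of_le (P.p_mono i (by omega)) (pmono j hj (i + 1) hij)
  have tmem01 : ∀ i, i < P.n → P.t i ∈ Set.Icc (0 : ℝ) 1 := by
    intro i hi
    obtain ⟨h1, h2⟩ := P.t_mem i hi
    constructor
    · calc (0 : ℝ) = P.p 0 := P.p_zero.symm
        _ ≤ P.p i := pmono i (by omega) 0 (by omega)
        _ ≤ P.t i := h1
    · calc P.t i ≤ P.p (i + 1) := h2
        _ ≤ P.p P.n := pmono P.n le_rfl (i + 1) (by omega)
        _ = 1 := P.p_last
  set Δ : ℕ → ℝ := fun i => P.p (i + 1) - P.p i with hΔ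
  have Δpos : ∀ i, i < P.n → 0 < Δ i := fun i hi => sub_pos.mpr (P.p_mono i hi)
  -- key: for any value c, the total length of intervals whose tag equals c is ≤ 2δ
  have key : ∀ c : ℝ,
      ∑ i ∈ (Finset.range P.n).filter (fun i => P.t i = c), Δ i ≤ 2 * (ε / 3) := by
    intro c
    set s := (Finset.range P.n).filter (fun i => P.t i = c) with hs
    rcases s.eq_empty_or_nonempty with h | h
    · rw [h]; simp; positivity
    · have hsub : s ⊆ {s.min' h, s.min' h + 1} := by
        intro j hj
        set i0 := s.min' h with hi0def
        have hi0 : i0 ∈ s := s.min'_mem h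
        have hle : i0 ≤ j := s.min'_le j hj
        rcases eq_or_lt_of_le hle with heq | hlt
        · simp [← heq]
        · have hi0n : i0 < P.n := Finset.mem_range.mp (Finset.mem_filter.mp hi0).1
          have hjn : j < P.n := Finset.mem_range.mp (Finset.mem_filter.mp hj).1
          have hti0 : P.t i0 = c := (Finset.mem_filter.mp hi0).2
          have htj : P.t j = c := (Finset.mem_filter.mp hj).2
          have h1 : c ≤ P.p (i0 + 1) := hti0 ▸ (P.t_mem i0 hi0n).2
          have h2 : P.p j ≤ c := htj ▸ (P.t_mem j hjn).1
          simp only [Finset.mem_insert, Finset.mem_singleton]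
          by_contra hne
          push_neg at hne
          have hj' : i0 + 1 < j := by omega
          have := pstrict (i0 + 1) j hj' hjn.le
          linarith
      have hcard : s.card ≤ 2 := by
        calc s.card ≤ ({s.min' h, s.min' h + 1} : Finset ℕ).card := Finset.card_le_card hsub
          _ ≤ 2 := by
            apply (Finset.card_insert_le _ _).trans
            simp
      have hbound : ∀ i ∈ s, Δ i ≤ ε / 3 := by
        intro i hi
        have hin : i < P.n := Finset.mem_range.mp (Finset.mem_filter.mp hi).1
        exact (hP i hin).le
      calc ∑ i ∈ s, Δ i ≤ s.card • (ε / 3) := Finset.sum_le_card_nsmul s Δ (ε / 3) hbound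
        _ ≤ 2 • (ε / 3) := nsmul_le_nsmul_left (by positivity) hcard
        _ = 2 * (ε / 3) := by rw [nsmul_eq_mul]; norm_num
  -- value of f at the tags, coordinatewise
  have fval : ∀ i, i < P.n → ∀ m : ℕ,
      (f (P.t i)) m = if P.t i = (q m).val then 1 else 0 := by
    intro i hi m
    by_cases hprop : P.t i ∈ Set.Icc (0 : ℝ) 1 ∧ ∃ r : ℚ, (r : ℝ) = P.t i
    · rw [hf_rat _ hprop, he]
      congr 1
      have : (m = q.symm ⟨P.t i, hprop⟩) = (q m = ⟨P.t i, hprop⟩) := by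
        exact propext (Equiv.eq_symm_apply q)
      rw [this]
      rw [show (q m = (⟨P.t i, hprop⟩ : RatIn01)) = ((q m).val = P.t i) from
        propext Subtype.ext_iff]
      exact propext ⟨fun h => h.symm, fun h => h.symm⟩
    · rw [hf_irr _ hprop]
      have : ¬ P.t i = (q m).val := by
        intro heq
        exact hprop (heq ▸ (q m).property)
      rw [if_neg this]
      rfl
  -- coordinatewise value of the Riemann sum
  have hsum : ∀ m : ℕ, (riemannSum f P) m
      = ∑ i ∈ (Finset.range P.n).filter (fun i => P.t i = (q m).val), Δ i := by
    intro m
    have hev := map_sum (AddMonoidHom.mk' (fun g : ZeroAtInftyContinuousMap ℕ ℝ => g m)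
        (fun a b => by simp [ZeroAtInftyContinuousMap.coe_add]))
        (fun i => Δ i • f (P.t i)) (Finset.range P.n)
    simp only [AddMonoidHom.mk'_apply] at hev
    have : (riemannSum f P) m = ∑ i ∈ Finset.range P.n, Δ i * (f (P.t i)) m := by
      rw [riemannSum] at *
      rw [hev]
      refine Finset.sum_congr rfl fun i _ => ?_
      simp [ZeroAtInftyContinuousMap.coe_smul, smul_eq_mul]
    rw [this]
    rw [Finset.sum_filter]
    refine Finset.sum_congr rfl fun i hi => ?_
    rw [fval i (Finset.mem_range.mp hi) m]
    by_cases hc : P.t i = (q m).val <;> simp [hc]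
  -- norm bound
  have hnorm : ‖riemannSum f P‖ ≤ 2 * (ε / 3) := by
    rw [← ZeroAtInftyContinuousMap.norm_toBCF_eq_norm]
    apply BoundedContinuousFunction.norm_le (by positivity) |>.mpr
    intro m
    have := key (q m).val
    have hnn : 0 ≤ ∑ i ∈ (Finset.range P.n).filter (fun i => P.t i = (q m).val), Δ i :=
      Finset.sum_nonneg fun i hi =>
        (Δpos i (Finset.mem_range.mp (Finset.mem_filter.mp hi).1)).le
    have heval : (riemannSum f P).toBCF m = (riemannSum f P) m := rfl
    rw [heval, hsum m, Real.norm_eq_abs, abs_of_nonneg hnn]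
    exact this
  calc ‖(0 : ZeroAtInftyContinuousMap ℕ ℝ) - riemannSum f P‖ = ‖riemannSum f P‖ := by
        rw [zero_sub, norm_neg]
    _ ≤ 2 * (ε / 3) := hnorm
    _ < ε := by linarith
end

section
/- For 1 < p < ∞, the function f : [0,1] → ℓᵖ mapping an enumeration of the rationals in [0,1] to the standard unit vectors of ℓᵖ and the irrationals to 0 is Riemann-integrable with integral 0; consequently ℓᵖ fails the Lebesgue property for 1 < p < ∞. -/
open Finset MeasureTheory

private lemma aux_norm_sum (p : ENNReal) [Fact (1 ≤ p)] (hr : 1 < p.toReal)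
    (δ : ℝ) (s : Finset ℕ) (idx : ℕ → ℕ) (hinj : Set.InjOn idx ↑s)
    (c : ℕ → ℝ) (hc0 : ∀ i ∈ s, 0 ≤ c i) (hcδ : ∀ i ∈ s, c i ≤ δ) :
    ‖∑ i ∈ s, (lp.single p (idx i) (c i) : lp (fun _ : ℕ => ℝ) p)‖ ^ p.toReal
      ≤ δ ^ (p.toReal - 1) * ∑ i ∈ s, c i := by
  have hr0 : 0 < p.toReal := lt_trans one_pos hr
  have hinj' : ∀ x ∈ s, ∀ y ∈ s, idx x = idx y → x = y := fun x hx y hy h =>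
    hinj (Finset.mem_coe.mpr hx) (Finset.mem_coe.mpr hy) h
  have h1 : ∑ i ∈ s, lp.single p (idx i) (c i)
      = ∑ k ∈ s.image idx,
          (lp.single p k (c (Function.invFunOn idx ↑s k)) : lp (fun _ : ℕ => ℝ) p) := by
    rw [Finset.sum_image hinj']
    refine Finset.sum_congr rfl fun i hi => ?_
    rw [hinj.leftInvOn_invFunOn (Finset.mem_coe.mpr hi)]
  rw [h1, lp.norm_sum_single hr0, Finset.sum_image hinj']
  have h2 : ∀ i ∈ s, ‖c (Function.invFunOn idx ↑s (idx i))‖ ^ p.toReal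
      ≤ δ ^ (p.toReal - 1) * c i := by
    intro i hi
    rw [hinj.leftInvOn_invFunOn (Finset.mem_coe.mpr hi), Real.norm_eq_abs,
      abs_of_nonneg (hc0 i hi)]
    rcases eq_or_lt_of_le (hc0 i hi) with h | h
    · rw [← h, Real.zero_rpow hr0.ne', mul_zero]
    · calc c i ^ p.toReal = c i ^ (p.toReal - 1) * c i := by
            rw [Real.rpow_sub h, Real.rpow_one, div_mul_cancel₀ _ (ne_of_gt h)]
        _ ≤ δ ^ (p.toReal - 1) * c i := by
            have : c i ^ (p.toReal - 1) ≤ δ ^ (p.toReal - 1) :=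
              Real.rpow_le_rpow (le_of_lt h) (hcδ i hi) (by linarith)
            exact mul_le_mul_of_nonneg_right this (le_of_lt h)
  calc ∑ i ∈ s, ‖c (Function.invFunOn idx ↑s (idx i))‖ ^ p.toReal
      ≤ ∑ i ∈ s, δ ^ (p.toReal - 1) * c i := Finset.sum_le_sum h2
    _ = δ ^ (p.toReal - 1) * ∑ i ∈ s, c i := (Finset.mul_sum _ _ _).symm

theorem lp_unit_vector_function_riemann_integrable_and_fails_Lebesgue
    (p : ENNReal) [Fact (1 ≤ p)] (hp : 1 < p) (hp' : p < ⊤)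
    (q : ℕ ≃ RatIn01)
    (f : ℝ → lp (fun _ : ℕ => ℝ) p)
    (hf_rat : ∀ (t : ℝ) (h : t ∈ Set.Icc (0 : ℝ) 1 ∧ ∃ r : ℚ, (r : ℝ) = t),
      f t = lp.single p (q.symm ⟨t, h⟩ : ℕ) (1 : ℝ))
    (hf_irr : ∀ t : ℝ, ¬(t ∈ Set.Icc (0 : ℝ) 1 ∧ ∃ r : ℚ, (r : ℝ) = t) → f t = 0) :
    HasRiemannIntegral f 0 ∧ ¬ LebesgueProperty (lp (fun _ : ℕ => ℝ) p) := by
  classical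
  set r := p.toReal with hr_def
  have hr1 : 1 < r := by
    have := (ENNReal.toReal_lt_toReal ENNReal.one_ne_top hp'.ne).mpr hp
    simpa using this
  have hr0 : 0 < r := lt_trans one_pos hr1
  have hint : HasRiemannIntegral f 0 := by
    intro ε hε
    set δ := min 1 ((ε / 4) ^ (r / (r - 1))) with hδ_def
    have hδpos : 0 < δ := lt_min one_pos (Real.rpow_pos_of_pos (by linarith) _)
    refine ⟨δ, hδpos, ?_⟩
    intro P hP
    rw [zero_sub, norm_neg]
    -- strict monotonicity of partition points
    have hmono : ∀ b ≤ P.n, ∀ a < b, P.p a < P.p b := by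
      intro b
      induction b with
      | zero => intro _ a ha; omega
      | succ b ih =>
        intro hb a ha
        have hb' : P.p b < P.p (b + 1) := P.p_mono b (by omega)
        rcases Nat.lt_succ_iff_lt_or_eq.mp ha with h | h
        · exact lt_trans (ih (by omega) a h) hb'
        · subst h; exact hb'
    have hΔ0 : ∀ i < P.n, 0 ≤ P.p (i + 1) - P.p i := fun i hi =>
      le_of_lt (sub_pos.mpr (P.p_mono i hi))
    have hsum1 : ∑ i ∈ Finset.range P.n, (P.p (i + 1) - P.p i) = 1 := by
      rw [Finset.sum_range_sub, P.p_last, P.p_zero, sub_zero]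
    set pred : ℝ → Prop := fun x => x ∈ Set.Icc (0 : ℝ) 1 ∧ ∃ rr : ℚ, (rr : ℝ) = x
      with hpred_def
    set idx : ℕ → ℕ := fun i =>
      if h : pred (P.t i) then (q.symm ⟨P.t i, h⟩ : ℕ) else 0 with hidx_def
    -- bound for a "spread out" class of indices
    have hclass : ∀ s : Finset ℕ, (∀ i ∈ s, i < P.n) →
        (∀ i ∈ s, ∀ j ∈ s, i < j → i + 1 < j) →
        ‖∑ i ∈ s, (P.p (i + 1) - P.p i) • f (P.t i)‖ ≤ (δ ^ (r - 1)) ^ r⁻¹ := by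
      intro s hsub hgap
      have htags : ∀ i ∈ s, ∀ j ∈ s, i < j → P.t i < P.t j := by
        intro i hi j hj hij
        have h1 : P.t i ≤ P.p (i + 1) := (P.t_mem i (hsub i hi)).2
        have h2 : P.p j ≤ P.t j := (P.t_mem j (hsub j hj)).1
        have h3 : P.p (i + 1) < P.p j :=
          hmono j (le_of_lt (hsub j hj)) (i + 1) (hgap i hi j hj hij)
        linarith
      set s' := s.filter (fun i => pred (P.t i)) with hs'_def
      have hs'sub : ∀ i ∈ s', i ∈ s := fun i hi => (Finset.mem_filter.mp hi).1
      have hsum_eq : ∑ i ∈ s, (P.p (i + 1) - P.p i) • f (P.t i)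
          = ∑ i ∈ s', (lp.single p (idx i) (P.p (i + 1) - P.p i) :
              lp (fun _ : ℕ => ℝ) p) := by
        rw [← Finset.sum_filter_add_sum_filter_not s (fun i => pred (P.t i))]
        have hz : ∑ i ∈ s.filter (fun i => ¬ pred (P.t i)),
            (P.p (i + 1) - P.p i) • f (P.t i) = 0 := by
          refine Finset.sum_eq_zero fun i hi => ?_
          rw [hf_irr _ (Finset.mem_filter.mp hi).2, smul_zero]
        rw [hz, add_zero]
        refine Finset.sum_congr rfl fun i hi => ?_
        have hpredi : pred (P.t i) := (Finset.mem_filter.mp hi).2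
        have hidxi : idx i = (q.symm ⟨P.t i, hpredi⟩ : ℕ) := dif_pos hpredi
        rw [hf_rat _ hpredi, ← lp.single_smul, smul_eq_mul, mul_one, hidxi]
      have hinj : Set.InjOn idx ↑s' := by
        intro i hi j hj hij
        have his : i ∈ s := hs'sub i (Finset.mem_coe.mp hi)
        have hjs : j ∈ s := hs'sub j (Finset.mem_coe.mp hj)
        have hpi : pred (P.t i) := (Finset.mem_filter.mp (Finset.mem_coe.mp hi)).2
        have hpj : pred (P.t j) := (Finset.mem_filter.mp (Finset.mem_coe.mp hj)).2
        have e1 : idx i = (q.symm ⟨P.t i, hpi⟩ : ℕ) := dif_pos hpi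
        have e2 : idx j = (q.symm ⟨P.t j, hpj⟩ : ℕ) := dif_pos hpj
        have heq : (⟨P.t i, hpi⟩ : RatIn01) = ⟨P.t j, hpj⟩ := by
          apply q.symm.injective
          rw [e1, e2] at hij
          exact hij
        have hteq : P.t i = P.t j := congrArg Subtype.val heq
        rcases lt_trichotomy i j with h | h | h
        · exact absurd hteq (ne_of_lt (htags i his j hjs h))
        · exact h
        · exact absurd hteq.symm (ne_of_lt (htags j hjs i his h))
      have hkey := aux_norm_sum p hr1 δ s' idx hinj
        (fun i => P.p (i + 1) - P.p i)
        (fun i hi => hΔ0 i (hsub i (hs'sub i hi)))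
        (fun i hi => le_of_lt (hP i (hsub i (hs'sub i hi))))
      have hsle1 : ∑ i ∈ s', (P.p (i + 1) - P.p i) ≤ 1 := by
        rw [← hsum1]
        refine Finset.sum_le_sum_of_subset_of_nonneg ?_ ?_
        · intro i hi; exact Finset.mem_range.mpr (hsub i (hs'sub i hi))
        · intro i hi _; exact hΔ0 i (Finset.mem_range.mp hi)
      have hnorm_pow : ‖∑ i ∈ s, (P.p (i + 1) - P.p i) • f (P.t i)‖ ^ r ≤ δ ^ (r - 1) := by
        rw [hsum_eq]
        calc ‖∑ i ∈ s', (lp.single p (idx i) (P.p (i + 1) - P.p i) :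
              lp (fun _ : ℕ => ℝ) p)‖ ^ r
            ≤ δ ^ (r - 1) * ∑ i ∈ s', (P.p (i + 1) - P.p i) := hkey
          _ ≤ δ ^ (r - 1) * 1 := by
              refine mul_le_mul_of_nonneg_left hsle1 ?_
              exact Real.rpow_nonneg (le_of_lt hδpos) _
          _ = δ ^ (r - 1) := mul_one _
      calc ‖∑ i ∈ s, (P.p (i + 1) - P.p i) • f (P.t i)‖
          = (‖∑ i ∈ s, (P.p (i + 1) - P.p i) • f (P.t i)‖ ^ r) ^ r⁻¹ :=
            (Real.rpow_rpow_inv (norm_nonneg _) hr0.ne').symm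
        _ ≤ (δ ^ (r - 1)) ^ r⁻¹ :=
            Real.rpow_le_rpow (Real.rpow_nonneg (norm_nonneg _) _) hnorm_pow
              (by positivity)
    -- apply to even and odd classes
    have hEgap : ∀ i ∈ (Finset.range P.n).filter (fun i => Even i),
        ∀ j ∈ (Finset.range P.n).filter (fun i => Even i), i < j → i + 1 < j := by
      intro i hi j hj hij
      have h1 := Nat.even_iff.mp (Finset.mem_filter.mp hi).2
      have h2 := Nat.even_iff.mp (Finset.mem_filter.mp hj).2
      omega
    have hOgap : ∀ i ∈ (Finset.range P.n).filter (fun i => ¬ Even i),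
        ∀ j ∈ (Finset.range P.n).filter (fun i => ¬ Even i), i < j → i + 1 < j := by
      intro i hi j hj hij
      have h1 := Nat.not_even_iff.mp (Finset.mem_filter.mp hi).2
      have h2 := Nat.not_even_iff.mp (Finset.mem_filter.mp hj).2
      omega
    have hA := hclass ((Finset.range P.n).filter (fun i => Even i))
      (fun i hi => Finset.mem_range.mp (Finset.mem_filter.mp hi).1) hEgap
    have hB := hclass ((Finset.range P.n).filter (fun i => ¬ Even i))
      (fun i hi => Finset.mem_range.mp (Finset.mem_filter.mp hi).1) hOgap
    have hεb : (δ ^ (r - 1)) ^ r⁻¹ ≤ ε / 4 := by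
      have hδle : δ ≤ (ε / 4) ^ (r / (r - 1)) := min_le_right _ _
      have h1 : δ ^ (r - 1) ≤ ((ε / 4) ^ (r / (r - 1))) ^ (r - 1) :=
        Real.rpow_le_rpow (le_of_lt hδpos) hδle (by linarith)
      have h2 : ((ε / 4) ^ (r / (r - 1))) ^ (r - 1) = (ε / 4) ^ r := by
        rw [← Real.rpow_mul (by linarith : (0:ℝ) ≤ ε / 4),
          div_mul_cancel₀ _ (by linarith : r - 1 ≠ 0)]
      calc (δ ^ (r - 1)) ^ r⁻¹ ≤ ((ε / 4) ^ r) ^ r⁻¹ :=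
            Real.rpow_le_rpow (Real.rpow_nonneg (le_of_lt hδpos) _)
              (h1.trans_eq h2) (by positivity)
        _ = ε / 4 := Real.rpow_rpow_inv (by linarith) hr0.ne'
    have hsplit : riemannSum f P
        = (∑ i ∈ (Finset.range P.n).filter (fun i => Even i),
            (P.p (i + 1) - P.p i) • f (P.t i))
          + (∑ i ∈ (Finset.range P.n).filter (fun i => ¬ Even i),
            (P.p (i + 1) - P.p i) • f (P.t i)) := by
      rw [riemannSum, Finset.sum_filter_add_sum_filter_not]
    calc ‖riemannSum f P‖
        ≤ ‖∑ i ∈ (Finset.range P.n).filter (fun i => Even i),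
            (P.p (i + 1) - P.p i) • f (P.t i)‖
          + ‖∑ i ∈ (Finset.range P.n).filter (fun i => ¬ Even i),
            (P.p (i + 1) - P.p i) • f (P.t i)‖ := by
          rw [hsplit]; exact norm_add_le _ _
      _ ≤ ε / 4 + ε / 4 := add_le_add (hA.trans hεb) (hB.trans hεb)
      _ < ε := by linarith
  refine ⟨hint, ?_⟩
  intro hleb
  have hcont := hleb f ⟨0, hint⟩
  set μ := volume.restrict (Set.Icc (0 : ℝ) 1) with hμ_def
  have hμne : μ ≠ 0 := by
    intro h
    have h1 : μ (Set.Icc (0 : ℝ) 1) = 1 := by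
      rw [hμ_def, Measure.restrict_apply_self, Real.volume_Icc]
      norm_num
    rw [h] at h1
    simp at h1
  haveI : (ae μ).NeBot := ae_neBot.mpr hμne
  have h2 : ∀ᵐ t ∂μ, t ∉ Set.range ((↑) : ℚ → ℝ) := by
    refine ae_restrict_of_ae ?_
    exact measure_eq_zero_iff_ae_notMem.mp ((Set.countable_range _).measure_zero _)
  have h3 : ∀ᵐ t ∂μ, t ∈ Set.Icc (0 : ℝ) 1 := ae_restrict_mem measurableSet_Icc
  obtain ⟨t, hcwa, hirr, hmem⟩ := (hcont.and (h2.and h3)).exists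
  have hft : f t = 0 := hf_irr t (by rintro ⟨-, rr, hrr⟩; exact hirr ⟨rr, hrr⟩)
  set Q : Set ℝ := {x | x ∈ Set.Icc (0 : ℝ) 1 ∧ ∃ rr : ℚ, (rr : ℝ) = x} with hQ_def
  have hQsub : Q ⊆ Set.Icc 0 1 := fun x hx => hx.1
  have hcl : t ∈ closure Q := by
    rw [Metric.mem_closure_iff]
    intro ε hε
    rcases lt_or_eq_of_le hmem.2 with h1 | h1
    · obtain ⟨rr, hrr1, hrr2⟩ := exists_rat_btwn (lt_min h1 (lt_add_of_pos_right t hε))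
      have hrA : (rr : ℝ) ≤ 1 := le_of_lt (lt_of_lt_of_le hrr2 (min_le_left _ _))
      have hrB : (rr : ℝ) < t + ε := lt_of_lt_of_le hrr2 (min_le_right _ _)
      refine ⟨rr, ⟨⟨le_trans hmem.1 (le_of_lt hrr1), hrA⟩, rr, rfl⟩, ?_⟩
      rw [Real.dist_eq, abs_lt]
      constructor <;> linarith
    · obtain ⟨rr, hrr1, hrr2⟩ := exists_rat_btwn
        (max_lt one_pos (by linarith : 1 - ε < 1))
      have hr0' : (0:ℝ) ≤ rr := le_of_lt (lt_of_le_of_lt (le_max_left _ _) hrr1)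
      have hrε : 1 - ε < (rr : ℝ) := lt_of_le_of_lt (le_max_right _ _) hrr1
      refine ⟨rr, ⟨⟨hr0', le_of_lt hrr2⟩, rr, rfl⟩, ?_⟩
      rw [← h1] at hrr2 hrε
      rw [Real.dist_eq, abs_lt]
      constructor <;> linarith
  have hnebot : (nhdsWithin t Q).NeBot := mem_closure_iff_nhdsWithin_neBot.mp hcl
  have htend : Filter.Tendsto f (nhdsWithin t Q) (nhds 0) := by
    have h := hcwa.mono_left (nhdsWithin_mono t hQsub)
    rwa [hft] at h
  have hev : ∀ᶠ x in nhdsWithin t Q, ‖f x‖ < 1 / 2 := by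
    have h := htend.norm
    rw [norm_zero] at h
    exact h.eventually (gt_mem_nhds (by norm_num))
  have hev2 : ∀ᶠ x in nhdsWithin t Q, ‖f x‖ = 1 := by
    filter_upwards [self_mem_nhdsWithin] with x hx
    rw [hf_rat x hx]
    have := lp.norm_single (E := fun _ : ℕ => ℝ) (lt_of_lt_of_le zero_lt_one (Fact.out : 1 ≤ p))
      (q.symm ⟨x, hx⟩ : ℕ) (1 : ℝ)
    simpa using this
  obtain ⟨x, h1x, h2x⟩ := (hev.and hev2).exists
  rw [h2x] at h1x
  norm_num at h1x
end

section
/- A function f : [0,1] → X is Riemann-integrable if and only if there exists x ∈ X such that for every ε > 0 there is n ∈ ℕ so that for all m ≥ n and every choice of interior tags tᵢ ∈ ((i−1)/2ᵐ, i/2ᵐ) for 1 ≤ i ≤ 2ᵐ, one has ‖x − 2^{−m} Σ_{i=1}^{2ᵐ} f(tᵢ)‖ < ε. -/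
open Finset MeasureTheory

namespace TaggedPartition
variable (P : TaggedPartition)

variable (P : TaggedPartition)

lemma p_le_p : ∀ {a b : ℕ}, a ≤ b → b ≤ P.n → P.p a ≤ P.p b := by
  intro a b hab hb
  induction b with
  | zero => interval_cases a; rfl
  | succ b ih =>
    rcases Nat.eq_or_lt_of_le hab with h | h
    · rw [h]
    · exact (ih (Nat.lt_succ_iff.mp h) (le_trans (Nat.le_succ b) hb)).trans
        (le_of_lt (P.p_mono b (Nat.lt_of_succ_le hb)))

lemma p_nonneg {i : ℕ} (hi : i ≤ P.n) : 0 ≤ P.p i := by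
  have := P.p_le_p (Nat.zero_le i) hi; rwa [P.p_zero] at this

lemma p_le_one {i : ℕ} (hi : i ≤ P.n) : P.p i ≤ 1 := by
  have := P.p_le_p hi le_rfl; rwa [P.p_last] at this

lemma idx_unique {y : ℝ} {i i' : ℕ} (hi : i < P.n) (hi' : i' < P.n)
    (h1 : P.p i ≤ y) (h2 : y < P.p (i + 1)) (h1' : P.p i' ≤ y) (h2' : y < P.p (i' + 1)) :
    i = i' := by
  rcases lt_trichotomy i i' with h | h | h
  · exact absurd (lt_of_lt_of_le h2 ((P.p_le_p (Nat.succ_le_of_lt h) hi'.le).trans h1'))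
      (lt_irrefl y)
  · exact h
  · exact absurd (lt_of_lt_of_le h2' ((P.p_le_p (Nat.succ_le_of_lt h) hi.le).trans h1))
      (lt_irrefl y)

lemma idx_unique' {y : ℝ} {i i' : ℕ} (hi : i < P.n) (hi' : i' < P.n)
    (h1 : P.p i < y) (h2 : y ≤ P.p (i + 1)) (h1' : P.p i' < y) (h2' : y ≤ P.p (i' + 1)) :
    i = i' := by
  rcases lt_trichotomy i i' with h | h | h
  · exact absurd (lt_of_le_of_lt (h2.trans (P.p_le_p (Nat.succ_le_of_lt h) hi'.le)) h1')
      (lt_irrefl y)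
  · exact h
  · exact absurd (lt_of_le_of_lt (h2'.trans (P.p_le_p (Nat.succ_le_of_lt h) hi.le)) h1)
      (lt_irrefl y)

lemma exists_idx {y : ℝ} (h0 : 0 ≤ y) (h1 : y < 1) :
    ∃ i, i < P.n ∧ P.p i ≤ y ∧ y < P.p (i + 1) := by
  have hw : ∃ i, y < P.p (i + 1) := by
    refine ⟨P.n - 1, ?_⟩
    rw [Nat.sub_add_cancel (Nat.one_le_iff_ne_zero.mpr P.n_pos.ne'), P.p_last]; exact h1
  refine ⟨Nat.find hw, ?_, ?_, Nat.find_spec hw⟩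
  · have : P.n - 1 < P.n := Nat.sub_lt P.n_pos one_pos
    exact lt_of_le_of_lt (Nat.find_min' hw (by
      rw [Nat.sub_add_cancel (Nat.one_le_iff_ne_zero.mpr P.n_pos.ne'), P.p_last]; exact h1)) this
  · rcases Nat.eq_zero_or_pos (Nat.find hw) with h | h
    · rw [h, P.p_zero]; exact h0
    · have := Nat.find_min hw (Nat.sub_lt h one_pos)
      rw [Nat.sub_add_cancel (Nat.one_le_iff_ne_zero.mpr h.ne')] at this
      exact le_of_not_gt this

lemma t_mem_Icc01 {i : ℕ} (hi : i < P.n) : P.t i ∈ Set.Icc (0:ℝ) 1 := by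
  obtain ⟨h1, h2⟩ := P.t_mem i hi
  exact ⟨(P.p_nonneg hi.le).trans h1, h2.trans (P.p_le_one hi)⟩

end TaggedPartition

lemma piece_eq (p q c h' : ℝ) (hpq : p ≤ q) (hh : 0 < h') :
    max (min (q - c) h' - max (p - c) 0) 0
      = min (max (c + h') p) q - min (max c p) q := by
  rcases le_total (q - c) h' with h1 | h1 <;> rcases le_total (p - c) 0 with h2 | h2 <;>
    simp only [min_def, max_def] <;> split_ifs <;> linarith

lemma bounded_of_crit {X : Type*} [NormedAddCommGroup X] [NormedSpace ℝ X]
    (f : ℝ → X) (x : X) (m : ℕ)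
    (hcrit : ∀ t : ℕ → ℝ,
      (∀ i : ℕ, 1 ≤ i → i ≤ 2 ^ m → t i ∈ Set.Ioo (((i : ℝ) - 1) / 2 ^ m) ((i : ℝ) / 2 ^ m)) →
      ‖x - (2 ^ m : ℝ)⁻¹ • ∑ i ∈ Finset.Icc 1 (2 ^ m), f (t i)‖ < 1) :
    ∃ B : ℝ, 0 ≤ B ∧ ∀ t ∈ Set.Icc (0:ℝ) 1, ‖f t‖ ≤ B := by
  classical
  set N : ℕ := 2 ^ m with hN
  set h : ℝ := ((2:ℝ) ^ m)⁻¹ with hh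
  have hhpos : 0 < h := by positivity
  have hNh : (N : ℝ) * h = 1 := by
    rw [hN, hh]; push_cast; exact mul_inv_cancel₀ (by positivity)
  set mid : ℕ → ℝ := fun j => (((j:ℝ) - 1) + 1/2) * h with hmid
  have hmid_adm : ∀ i : ℕ, 1 ≤ i → i ≤ N →
      mid i ∈ Set.Ioo (((i : ℝ) - 1) / 2 ^ m) ((i : ℝ) / 2 ^ m) := by
    intro i _ _
    rw [div_eq_mul_inv, div_eq_mul_inv, ← hh]
    constructor
    · rw [hmid]; have : ((i:ℝ) - 1) < ((i:ℝ) - 1) + 1/2 := by linarith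
      exact mul_lt_mul_of_pos_right this hhpos
    · rw [hmid]; have : ((i:ℝ) - 1) + 1/2 < (i:ℝ) := by linarith
      exact mul_lt_mul_of_pos_right this hhpos
  refine ⟨(∑ j ∈ Finset.Icc 1 N, ‖f (mid j)‖) + 2 * 2 ^ m
    + ∑ j ∈ Finset.range (N+1), ‖f ((j:ℝ) * h)‖, by positivity, ?_⟩
  intro t ht
  obtain ⟨ht0, ht1⟩ := ht
  set k : ℕ := ⌊t * 2 ^ m⌋₊ with hk
  have htN : t * 2 ^ m ≤ (N:ℝ) := by
    rw [hN]; push_cast; nlinarith [pow_pos (by norm_num : (0:ℝ) < 2) m]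
  have hkle : (k:ℝ) ≤ t * 2 ^ m := Nat.floor_le (by positivity)
  have hklt : t * 2 ^ m < (k:ℝ) + 1 := Nat.lt_floor_add_one _
  have hkN : k ≤ N := by
    have : (k:ℝ) ≤ (N:ℝ) := hkle.trans htN
    exact_mod_cast this
  have hkh : (k:ℝ) * h ≤ t := by
    rw [hh]
    calc (k:ℝ) * ((2:ℝ)^m)⁻¹ ≤ (t * 2^m) * ((2:ℝ)^m)⁻¹ :=
          mul_le_mul_of_nonneg_right hkle (by positivity)
      _ = t := by field_simp
  by_cases heq : t = (k:ℝ) * h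
  · have hksum : ‖f t‖ ≤ ∑ j ∈ Finset.range (N+1), ‖f ((j:ℝ) * h)‖ := by
      rw [heq]
      exact Finset.single_le_sum (f := fun j : ℕ => ‖f ((j:ℝ) * h)‖) (fun j _ => norm_nonneg _)
        (Finset.mem_range.mpr (Nat.lt_succ_of_le hkN))
    have h1 : (0:ℝ) ≤ ∑ j ∈ Finset.Icc 1 N, ‖f (mid j)‖ :=
      Finset.sum_nonneg fun j _ => norm_nonneg _
    have h2 : (0:ℝ) ≤ 2 * 2 ^ m := by positivity
    linarith
  · have hlt : (k:ℝ) * h < t := lt_of_le_of_ne hkh (fun hc => heq hc.symm)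
    have hklt' : k < N := by
      rcases Nat.lt_or_ge k N with h' | h'
      · exact h'
      · exfalso
        have : k = N := le_antisymm hkN h'
        rw [this] at hlt
        rw [hNh] at hlt; linarith
    have hth : t < ((k:ℝ) + 1) * h := by
      calc t = (t * 2^m) * h := by rw [hh]; field_simp
        _ < ((k:ℝ)+1) * h := mul_lt_mul_of_pos_right hklt hhpos
    set u : ℕ → ℝ := Function.update mid (k+1) t with hu
    have hu_adm : ∀ i : ℕ, 1 ≤ i → i ≤ N →
        u i ∈ Set.Ioo (((i : ℝ) - 1) / 2 ^ m) ((i : ℝ) / 2 ^ m) := by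
      intro i h1 h2
      by_cases hik : i = k + 1
      · rw [hu, hik, Function.update_self]
        rw [div_eq_mul_inv, div_eq_mul_inv, ← hh]
        constructor
        · push_cast; rw [add_sub_cancel_right]; exact hlt
        · push_cast; exact hth
      · rw [hu, Function.update_of_ne hik]; exact hmid_adm i h1 h2
    have hc1 := hcrit u hu_adm
    have hc2 := hcrit mid hmid_adm
    have hdiff : (∑ i ∈ Finset.Icc 1 N, f (u i)) - (∑ i ∈ Finset.Icc 1 N, f (mid i))
        = f t - f (mid (k+1)) := by
      rw [← Finset.sum_sub_distrib]
      rw [Finset.sum_eq_single_of_mem (k+1)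
        (Finset.mem_Icc.mpr ⟨Nat.le_add_left 1 k, Nat.succ_le_of_lt hklt'⟩)]
      · rw [hu, Function.update_self]
      · intro i _ hne
        rw [hu, Function.update_of_ne hne, sub_self]
    have hnorm : ‖(2 ^ m : ℝ)⁻¹ • (f t - f (mid (k+1)))‖ < 2 := by
      have : (2 ^ m : ℝ)⁻¹ • (f t - f (mid (k+1)))
          = (x - (2 ^ m : ℝ)⁻¹ • ∑ i ∈ Finset.Icc 1 N, f (mid i))
            - (x - (2 ^ m : ℝ)⁻¹ • ∑ i ∈ Finset.Icc 1 N, f (u i)) := by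
        rw [← hdiff, smul_sub]; abel
      rw [this]
      calc ‖_ - _‖ ≤ ‖x - (2 ^ m : ℝ)⁻¹ • ∑ i ∈ Finset.Icc 1 N, f (mid i)‖
            + ‖x - (2 ^ m : ℝ)⁻¹ • ∑ i ∈ Finset.Icc 1 N, f (u i)‖ := norm_sub_le _ _
        _ < 2 := by linarith
    rw [norm_smul, Real.norm_eq_abs, abs_inv, abs_pow, abs_two] at hnorm
    have hft : ‖f t - f (mid (k+1))‖ < 2 * 2 ^ m := by
      have h2m : (0:ℝ) < 2 ^ m := by positivity
      rw [inv_mul_lt_iff₀ h2m] at hnorm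
      linarith [hnorm]
    have : ‖f t‖ ≤ ‖f (mid (k+1))‖ + 2 * 2 ^ m := by
      have := norm_sub_norm_le (f t) (f (mid (k+1)))
      linarith [hft, this]
    have hmidle : ‖f (mid (k+1))‖ ≤ ∑ j ∈ Finset.Icc 1 N, ‖f (mid j)‖ :=
      Finset.single_le_sum (f := fun j => ‖f (mid j)‖) (fun j _ => norm_nonneg _)
        (Finset.mem_Icc.mpr ⟨Nat.le_add_left 1 k, Nat.succ_le_of_lt hklt'⟩)
    have h3 : (0:ℝ) ≤ ∑ j ∈ Finset.range (N+1), ‖f ((j:ℝ) * h)‖ :=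
      Finset.sum_nonneg fun j _ => norm_nonneg _
    linarith

set_option maxHeartbeats 2000000 in
lemma key_estimate {X : Type*} [NormedAddCommGroup X] [NormedSpace ℝ X] [CompleteSpace X]
    (f : ℝ → X) (x : X) (B : ℝ) (hB0 : 0 ≤ B)
    (hB : ∀ t ∈ Set.Icc (0:ℝ) 1, ‖f t‖ ≤ B) (m : ℕ) (ε' : ℝ) (hε' : 0 < ε')
    (hcrit : ∀ t : ℕ → ℝ,
      (∀ i : ℕ, 1 ≤ i → i ≤ 2 ^ m → t i ∈ Set.Ioo (((i : ℝ) - 1) / 2 ^ m) ((i : ℝ) / 2 ^ m)) →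
      ‖x - (2 ^ m : ℝ)⁻¹ • ∑ i ∈ Finset.Icc 1 (2 ^ m), f (t i)‖ < ε')
    (P : TaggedPartition) (δ : ℝ) (hmesh : P.MeshLt δ) :
    ‖x - riemannSum f P‖ ≤ ε' + 4 * B * 2 ^ m * δ := by
  classical
  have hδpos : 0 < δ := by
    have h0 := P.p_mono 0 P.n_pos
    have := hmesh 0 P.n_pos
    linarith
  set N : ℕ := 2 ^ m with hNdef
  set h : ℝ := ((2:ℝ) ^ m)⁻¹ with hhdef
  have hhpos : 0 < h := by positivity
  have hNh : (N : ℝ) * h = 1 := by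
    rw [hNdef, hhdef]; push_cast; exact mul_inv_cancel₀ (by positivity)
  set Cond : ℕ → ℕ → Prop := fun j i =>
    ((j:ℝ)-1)*h ≤ P.p i ∧ P.p (i+1) ≤ (j:ℝ)*h ∧
    ((j:ℝ)-1)*h < P.t i ∧ P.t i < (j:ℝ)*h with hCond
  set mid : ℕ → ℝ := fun j => (((j:ℝ) - 1) + 1/2) * h with hmiddef
  set w : ℕ → ℕ → X := fun j i => if Cond j i then f (P.t i) else f (mid j) with hwdef
  set A : ℕ → ℕ → Set ℝ := fun j i =>
    Set.Ioo (max ((P.p i - ((j:ℝ)-1)*h)/h) 0) (min ((P.p (i+1) - ((j:ℝ)-1)*h)/h) 1)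
    with hAdef
  set μA : ℕ → ℕ → ℝ := fun j i => (volume (A j i)).toReal with hμAdef
  -- midpoints lie in [0,1] for relevant j
  have hmid_mem : ∀ j ∈ Finset.Icc 1 N, mid j ∈ Set.Icc (0:ℝ) 1 := by
    intro j hj
    rw [Finset.mem_Icc] at hj
    have hj1 : (1:ℝ) ≤ (j:ℝ) := by exact_mod_cast hj.1
    have hjN : (j:ℝ) ≤ (N:ℝ) := by exact_mod_cast hj.2
    constructor
    · rw [hmiddef]; apply mul_nonneg (by linarith) hhpos.le
    · rw [hmiddef]
      calc (((j:ℝ) - 1) + 1/2) * h ≤ (N:ℝ) * h := by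
            apply mul_le_mul_of_nonneg_right _ hhpos.le; linarith
        _ = 1 := hNh
  -- A j i ⊆ Ioo 0 1
  have hAsub : ∀ j i, A j i ⊆ Set.Ioo (0:ℝ) 1 := by
    intro j i θ hθ
    exact ⟨lt_of_le_of_lt (le_max_right _ 0) hθ.1, lt_of_lt_of_le hθ.2 (min_le_right _ 1)⟩
  -- membership characterization
  have hAmem : ∀ θ ∈ Set.Ioo (0:ℝ) 1, ∀ j i, θ ∈ A j i ↔
      (P.p i < ((j:ℝ)-1)*h + θ*h ∧ ((j:ℝ)-1)*h + θ*h < P.p (i+1)) := by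
    intro θ hθ j i
    rw [hAdef]
    simp only [Set.mem_Ioo, max_lt_iff, lt_min_iff]
    constructor
    · rintro ⟨⟨h1, -⟩, h2, -⟩
      rw [div_lt_iff₀ hhpos] at h1
      rw [lt_div_iff₀ hhpos] at h2
      exact ⟨by linarith [mul_comm θ h], by linarith [mul_comm θ h]⟩
    · rintro ⟨h1, h2⟩
      refine ⟨⟨?_, hθ.1⟩, ?_, hθ.2⟩
      · rw [div_lt_iff₀ hhpos]; linarith [mul_comm θ h]
      · rw [lt_div_iff₀ hhpos]; linarith [mul_comm θ h]
  -- closed formula for h * μA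
  have hμformula : ∀ i < P.n, ∀ j : ℕ, h * μA j i =
      min (max ((j:ℝ)*h) (P.p i)) (P.p (i+1)) -
      min (max (((j:ℝ)-1)*h) (P.p i)) (P.p (i+1)) := by
    intro i hi j
    have hpq : P.p i ≤ P.p (i+1) := (P.p_mono i hi).le
    rw [hμAdef]
    simp only
    rw [hAdef]
    simp only
    rw [Real.volume_Ioo, ENNReal.toReal_ofReal']
    rw [mul_max_of_nonneg _ _ hhpos.le, mul_zero, mul_sub,
      mul_min_of_nonneg _ _ hhpos.le, mul_max_of_nonneg _ _ hhpos.le, mul_zero, mul_one]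
    rw [mul_comm h ((P.p (i+1) - ((j:ℝ)-1)*h)/h), div_mul_cancel₀ _ hhpos.ne']
    rw [mul_comm h ((P.p i - ((j:ℝ)-1)*h)/h), div_mul_cancel₀ _ hhpos.ne']
    have := piece_eq (P.p i) (P.p (i+1)) (((j:ℝ)-1)*h) h hpq hhpos
    rw [this]
    congr 2
    ring
  -- nonneg and ≤ Δ_i
  have hμnonneg : ∀ j i, 0 ≤ h * μA j i := by
    intro j i
    exact mul_nonneg hhpos.le ENNReal.toReal_nonneg
  have hμle : ∀ i < P.n, ∀ j : ℕ, h * μA j i ≤ P.p (i+1) - P.p i := by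
    intro i hi j
    rw [hμformula i hi j]
    have hpq : P.p i ≤ P.p (i+1) := (P.p_mono i hi).le
    have h1 : min (max ((j:ℝ)*h) (P.p i)) (P.p (i+1)) ≤ P.p (i+1) := min_le_right _ _
    have h2 : P.p i ≤ min (max (((j:ℝ)-1)*h) (P.p i)) (P.p (i+1)) :=
      le_min (le_max_right _ _) hpq
    linarith
  -- sum over j of h * μA = Δ_i
  have hμsum : ∀ i < P.n, ∑ j ∈ Finset.Icc 1 N, h * μA j i = P.p (i+1) - P.p i := by
    intro i hi
    have hpq : P.p i ≤ P.p (i+1) := (P.p_mono i hi).le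
    have hcongr : ∀ k ∈ Finset.range N,
        h * μA (1 + k) i =
        (fun k => min (max (((k:ℕ):ℝ)*h) (P.p i)) (P.p (i+1))) (k+1)
          - (fun k => min (max (((k:ℕ):ℝ)*h) (P.p i)) (P.p (i+1))) k := by
      intro k _
      rw [hμformula i hi (1+k)]
      simp only
      push_cast
      ring_nf
    rw [← Finset.Ico_add_one_right_eq_Icc, Finset.sum_Ico_eq_sum_range]
    simp only [Nat.add_sub_cancel_left, Nat.succ_sub_one, Nat.add_sub_cancel]
    rw [Finset.sum_congr rfl hcongr,
      Finset.sum_range_sub (fun k => max (((k:ℕ):ℝ)*h) (P.p i) ⊓ P.p (i+1)) N]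
    simp only [Nat.cast_zero, zero_mul]
    rw [hNh]
    have hp0 : 0 ≤ P.p i := P.p_nonneg hi.le
    have hp1 : P.p (i+1) ≤ 1 := P.p_le_one hi
    have hp1' : P.p i ≤ 1 := P.p_le_one hi.le
    rw [max_eq_left hp1', min_eq_right hp1, max_eq_right hp0, min_eq_left hpq]
  have hAmeas : ∀ j i, MeasurableSet (A j i) := by
    intro j i; rw [hAdef]; exact measurableSet_Ioo
  -- integral setup
  set μ₀ : Measure ℝ := volume.restrict (Set.Ioo (0:ℝ) 1) with hμ₀
  haveI : IsFiniteMeasure μ₀ := by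
    constructor
    rw [hμ₀, Measure.restrict_apply_univ, Real.volume_Ioo]
    exact ENNReal.ofReal_lt_top
  set g : ℝ → X := fun θ => ∑ j ∈ Finset.Icc 1 N, ∑ i ∈ Finset.range P.n,
    (A j i).indicator (fun _ => w j i) θ with hgdef
  have hind_int : ∀ j i, Integrable ((A j i).indicator (fun _ => w j i)) μ₀ :=
    fun j i => (integrable_const (w j i)).indicator (hAmeas j i)
  have hg_int : Integrable g μ₀ := by
    rw [hgdef]
    apply integrable_finset_sum
    intro j _
    exact integrable_finset_sum _ (fun i _ => hind_int j i)
  have hμ₀A : ∀ j i, μ₀ (A j i) = volume (A j i) := by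
    intro j i
    rw [hμ₀, Measure.restrict_apply (hAmeas j i)]
    congr 1
    exact Set.inter_eq_left.mpr (hAsub j i)
  have hg_integral : ∫ θ, g θ ∂μ₀ = ∑ j ∈ Finset.Icc 1 N, ∑ i ∈ Finset.range P.n,
      μA j i • w j i := by
    rw [hgdef]
    rw [integral_finset_sum _ (fun j _ => integrable_finset_sum _ (fun i _ => hind_int j i))]
    refine Finset.sum_congr rfl fun j _ => ?_
    rw [integral_finset_sum _ (fun i _ => hind_int j i)]
    refine Finset.sum_congr rfl fun i _ => ?_
    rw [integral_indicator_const (w j i) (hAmeas j i), measureReal_def, hμ₀A, hμAdef]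
  -- bad set
  set BadF : Finset ℝ := ((Finset.Icc 1 N) ×ˢ (Finset.range (P.n+1))).image
    (fun q => (P.p q.2 - ((q.1:ℝ)-1)*h)/h) with hBadF
  have hBadnull : μ₀ (↑BadF : Set ℝ) = 0 := by
    have h1 : volume (↑BadF : Set ℝ) = 0 := (BadF.finite_toSet).measure_zero _
    have h2 : μ₀ (↑BadF : Set ℝ) ≤ volume (↑BadF : Set ℝ) := by
      rw [hμ₀, Measure.restrict_apply (BadF.finite_toSet.measurableSet)]
      exact measure_mono Set.inter_subset_left
    exact le_antisymm (h1 ▸ h2) zero_le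
  -- a.e. bound
  have hae : ∀ᵐ θ ∂μ₀, ‖x - h • g θ‖ ≤ ε' := by
    have hmem_ae : ∀ᵐ θ ∂μ₀, θ ∈ Set.Ioo (0:ℝ) 1 := by
      rw [hμ₀]; exact ae_restrict_mem measurableSet_Ioo
    have hbad_ae : ∀ᵐ θ ∂μ₀, θ ∉ (↑BadF : Set ℝ) :=
      measure_eq_zero_iff_ae_notMem.mp hBadnull
    filter_upwards [hmem_ae, hbad_ae] with θ hθ hθB
    -- θ avoids all partition points under all affine maps
    have hnoteq : ∀ j ∈ Finset.Icc 1 N, ∀ i ≤ P.n, ((j:ℝ)-1)*h + θ*h ≠ P.p i := by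
      intro j hj i hi hEq
      apply hθB
      refine Finset.mem_image.mpr ⟨(j, i), Finset.mem_product.mpr
        ⟨hj, Finset.mem_range.mpr (Nat.lt_succ_of_le hi)⟩, ?_⟩
      rw [div_eq_iff hhpos.ne']
      linarith [mul_comm θ h]
    -- the tag function
    set tg : ℕ → ℝ := fun j =>
      if H : ∃ i, i < P.n ∧ θ ∈ A j i ∧ Cond j i then P.t H.choose else mid j with htg
    have htg_adm : ∀ j : ℕ, 1 ≤ j → j ≤ N →
        tg j ∈ Set.Ioo (((j : ℝ) - 1) / 2 ^ m) ((j : ℝ) / 2 ^ m) := by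
      intro j h1 h2
      rw [div_eq_mul_inv, div_eq_mul_inv, ← hhdef, htg]
      simp only
      split_ifs with H
      · obtain ⟨-, -, -, -, hc3, hc4⟩ := H.choose_spec
        exact ⟨hc3, hc4⟩
      · rw [hmiddef]
        constructor
        · have : ((j:ℝ) - 1) < ((j:ℝ) - 1) + 1/2 := by linarith
          exact mul_lt_mul_of_pos_right this hhpos
        · have : ((j:ℝ) - 1) + 1/2 < (j:ℝ) := by linarith
          exact mul_lt_mul_of_pos_right this hhpos
    have htg_val : ∀ j ∈ Finset.Icc 1 N, f (tg j) =
        ∑ i ∈ Finset.range P.n, (A j i).indicator (fun _ => w j i) θ := by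
      intro j hj
      obtain ⟨hj1, hjN⟩ := Finset.mem_Icc.mp hj
      set y : ℝ := ((j:ℝ)-1)*h + θ*h with hy
      have hjR : (1:ℝ) ≤ (j:ℝ) := by exact_mod_cast hj1
      have hjNR : (j:ℝ) ≤ (N:ℝ) := by exact_mod_cast hjN
      have hy0 : 0 ≤ y := by
        rw [hy]
        have : 0 ≤ ((j:ℝ)-1)*h := mul_nonneg (by linarith) hhpos.le
        nlinarith [hθ.1, hhpos]
      have hy1 : y < 1 := by
        rw [hy]
        have h1 : θ * h < h := by nlinarith [hθ.2, hhpos]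
        have h2 : ((j:ℝ)-1)*h + h ≤ (N:ℝ)*h := by nlinarith
        linarith [hNh]
      obtain ⟨i₀, hi₀, hpi₀, hpi₀'⟩ := P.exists_idx hy0 hy1
      have hpi₀lt : P.p i₀ < y :=
        lt_of_le_of_ne hpi₀ (fun hc => hnoteq j hj i₀ hi₀.le hc.symm)
      have hmemA : θ ∈ A j i₀ := (hAmem θ hθ j i₀).mpr ⟨hpi₀lt, hpi₀'⟩
      have huniq : ∀ i ∈ Finset.range P.n, i ≠ i₀ → θ ∉ A j i := by
        intro i hi hne hA
        obtain ⟨ha, hb⟩ := (hAmem θ hθ j i).mp hA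
        exact hne (P.idx_unique (Finset.mem_range.mp hi) hi₀ ha.le hb hpi₀lt.le hpi₀')
      have hRHS : ∑ i ∈ Finset.range P.n, (A j i).indicator (fun _ => w j i) θ
          = w j i₀ := by
        rw [Finset.sum_eq_single_of_mem i₀ (Finset.mem_range.mpr hi₀)]
        · exact Set.indicator_of_mem hmemA _
        · intro i hi hne
          exact Set.indicator_of_notMem (huniq i hi hne) _
      rw [hRHS, htg]
      simp only
      by_cases hc : Cond j i₀
      · have H : ∃ i, i < P.n ∧ θ ∈ A j i ∧ Cond j i := ⟨i₀, hi₀, hmemA, hc⟩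
        rw [dif_pos H]
        have hch := H.choose_spec
        have : H.choose = i₀ := by
          by_contra hne
          exact huniq H.choose (Finset.mem_range.mpr hch.1) hne hch.2.1
        rw [this, hwdef]
        simp only [if_pos hc]
      · have H' : ¬ ∃ i, i < P.n ∧ θ ∈ A j i ∧ Cond j i := by
          rintro ⟨i, hi, hA, hC⟩
          have : i = i₀ := by
            by_contra hne
            exact huniq i (Finset.mem_range.mpr hi) hne hA
          exact hc (this ▸ hC)
        rw [dif_neg H', hwdef]
        simp only [if_neg hc]
    have := hcrit tg htg_adm
    have hsum_eq : ∑ i ∈ Finset.Icc 1 N, f (tg i) = g θ := by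
      rw [hgdef]
      exact Finset.sum_congr rfl htg_val
    rw [hsum_eq] at this
    exact le_of_lt this
  -- integral bound
  have huniv : (μ₀ Set.univ).toReal = 1 := by
    rw [hμ₀, Measure.restrict_apply_univ, Real.volume_Ioo]
    norm_num
  have hIbound : ‖x - h • ∫ θ, g θ ∂μ₀‖ ≤ ε' := by
    have hsm : Integrable (fun θ => h • g θ) μ₀ := hg_int.smul h
    have hxint : ∫ θ, (x - h • g θ) ∂μ₀ = x - h • ∫ θ, g θ ∂μ₀ := by
      have h1 : ∫ θ, (x - h • g θ) ∂μ₀ = (∫ _θ, x ∂μ₀) - ∫ θ, h • g θ ∂μ₀ :=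
        integral_sub (integrable_const x) hsm
      rw [h1, integral_smul, integral_const, measureReal_def, huniv, one_smul]
    rw [← hxint]
    calc ‖∫ θ, (x - h • g θ) ∂μ₀‖ ≤ ε' * (μ₀ Set.univ).toReal :=
          norm_integral_le_of_norm_le_const hae
      _ = ε' := by rw [huniv, mul_one]
  -- rewrite riemannSum
  have hS : riemannSum f P = ∑ j ∈ Finset.Icc 1 N, ∑ i ∈ Finset.range P.n,
      (h * μA j i) • f (P.t i) := by
    have hcongr2 : ∀ i ∈ Finset.range P.n, (P.p (i+1) - P.p i) • f (P.t i)
        = ∑ j ∈ Finset.Icc 1 N, (h * μA j i) • f (P.t i) := by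
      intro i hi
      rw [← Finset.sum_smul, hμsum i (Finset.mem_range.mp hi)]
    rw [riemannSum, Finset.sum_congr rfl hcongr2, Finset.sum_comm]
  have hhint : h • (∫ θ, g θ ∂μ₀) = ∑ j ∈ Finset.Icc 1 N, ∑ i ∈ Finset.range P.n,
      (h * μA j i) • w j i := by
    rw [hg_integral, Finset.smul_sum]
    refine Finset.sum_congr rfl fun j _ => ?_
    rw [Finset.smul_sum]
    refine Finset.sum_congr rfl fun i _ => ?_
    rw [smul_smul]
  have hdiff : h • (∫ θ, g θ ∂μ₀) - riemannSum f P
      = ∑ j ∈ Finset.Icc 1 N, ∑ i ∈ Finset.range P.n,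
        (h * μA j i) • (w j i - f (P.t i)) := by
    rw [hhint, hS, ← Finset.sum_sub_distrib]
    refine Finset.sum_congr rfl fun j _ => ?_
    rw [← Finset.sum_sub_distrib]
    refine Finset.sum_congr rfl fun i _ => ?_
    rw [smul_sub]
  -- per-j bound
  have hperj : ∀ j ∈ Finset.Icc 1 N,
      ‖∑ i ∈ Finset.range P.n, (h * μA j i) • (w j i - f (P.t i))‖ ≤ 2 * (2 * B * δ) := by
    intro j hj
    set Sbad := (Finset.range P.n).filter (fun i => ¬ Cond j i ∧ μA j i ≠ 0) with hSbad
    have hzero : ∀ i ∈ Finset.range P.n, i ∉ Sbad →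
        (h * μA j i) • (w j i - f (P.t i)) = 0 := by
      intro i hi hni
      by_cases hc : Cond j i
      · rw [hwdef]; simp only [if_pos hc, sub_self, smul_zero]
      · have hμ0 : μA j i = 0 := by
          by_contra hμ0
          exact hni (Finset.mem_filter.mpr ⟨hi, hc, hμ0⟩)
        rw [hμ0, mul_zero, zero_smul]
    have hsum_eq : ∑ i ∈ Finset.range P.n, (h * μA j i) • (w j i - f (P.t i))
        = ∑ i ∈ Sbad, (h * μA j i) • (w j i - f (P.t i)) :=
      (Finset.sum_subset (Finset.filter_subset _ _) hzero).symm
    rw [hsum_eq]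
    have hterm : ∀ i ∈ Sbad, ‖(h * μA j i) • (w j i - f (P.t i))‖ ≤ 2 * B * δ := by
      intro i hi
      rw [hSbad, Finset.mem_filter] at hi
      obtain ⟨hir, hnc, -⟩ := hi
      have hin : i < P.n := Finset.mem_range.mp hir
      rw [norm_smul, Real.norm_eq_abs, abs_of_nonneg (hμnonneg j i)]
      have h1 : h * μA j i ≤ δ := (hμle i hin j).trans (le_of_lt (hmesh i hin))
      have h2 : ‖w j i - f (P.t i)‖ ≤ 2 * B := by
        calc ‖w j i - f (P.t i)‖ ≤ ‖w j i‖ + ‖f (P.t i)‖ := norm_sub_le _ _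
          _ ≤ B + B := by
              apply add_le_add
              · rw [hwdef]; simp only [if_neg hnc]
                exact hB _ (hmid_mem j hj)
              · exact hB _ (P.t_mem_Icc01 hin)
          _ = 2 * B := by ring
      calc (h * μA j i) * ‖w j i - f (P.t i)‖ ≤ δ * (2*B) :=
            mul_le_mul h1 h2 (norm_nonneg _) hδpos.le
        _ = 2 * B * δ := by ring
    have hcard : Sbad.card ≤ 2 := by
      set T1 := (Finset.range P.n).filter
        (fun i => P.p i ≤ ((j:ℝ)-1)*h ∧ ((j:ℝ)-1)*h < P.p (i+1)) with hT1
      set T2 := (Finset.range P.n).filter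
        (fun i => P.p i < (j:ℝ)*h ∧ (j:ℝ)*h ≤ P.p (i+1)) with hT2
      have hsub : Sbad ⊆ T1 ∪ T2 := by
        intro i hi
        rw [hSbad, Finset.mem_filter] at hi
        obtain ⟨hir, hnc, hμ0⟩ := hi
        have hin : i < P.n := Finset.mem_range.mp hir
        have hvol : volume (A j i) ≠ 0 := by
          intro hc
          rw [hμAdef] at hμ0; simp only at hμ0
          rw [hc] at hμ0; simp at hμ0
        have hlt : max ((P.p i - ((j:ℝ)-1)*h)/h) 0
            < min ((P.p (i+1) - ((j:ℝ)-1)*h)/h) 1 := by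
          by_contra hc
          rw [hAdef] at hvol; simp only at hvol
          rw [Real.volume_Ioo] at hvol
          exact hvol (by rw [ENNReal.ofReal_eq_zero]; linarith [not_lt.mp hc])
        have hbpos : 0 < (P.p (i+1) - ((j:ℝ)-1)*h)/h :=
          lt_of_le_of_lt (le_max_right _ _) (hlt.trans_le (min_le_left _ _))
        have hb0 : ((j:ℝ)-1)*h < P.p (i+1) := by
          have := mul_pos hbpos hhpos
          rw [div_mul_cancel₀ _ hhpos.ne'] at this
          linarith
        have ha1 : (P.p i - ((j:ℝ)-1)*h)/h < 1 :=
          lt_of_le_of_lt (le_max_left _ _) (hlt.trans_le (min_le_right _ _))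
        have hring : ((j:ℝ)-1)*h + h = (j:ℝ)*h := by ring
        have ha1' : P.p i < (j:ℝ)*h := by
          rw [div_lt_one hhpos] at ha1
          linarith
        by_cases hle : P.p i ≤ ((j:ℝ)-1)*h
        · exact Finset.mem_union_left _ (Finset.mem_filter.mpr ⟨hir, hle, hb0⟩)
        · by_cases hge : (j:ℝ)*h ≤ P.p (i+1)
          · exact Finset.mem_union_right _ (Finset.mem_filter.mpr ⟨hir, ha1', hge⟩)
          · exfalso
            apply hnc
            push_neg at hle hge
            obtain ⟨ht1, ht2⟩ := P.t_mem i hin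
            exact ⟨hle.le, hge.le, lt_of_lt_of_le hle ht1, lt_of_le_of_lt ht2 hge⟩
      have hc1 : T1.card ≤ 1 := Finset.card_le_one.mpr (by
        intro a ha b hb
        rw [hT1, Finset.mem_filter] at ha hb
        exact P.idx_unique (Finset.mem_range.mp ha.1) (Finset.mem_range.mp hb.1)
          ha.2.1 ha.2.2 hb.2.1 hb.2.2)
      have hc2 : T2.card ≤ 1 := Finset.card_le_one.mpr (by
        intro a ha b hb
        rw [hT2, Finset.mem_filter] at ha hb
        exact P.idx_unique' (Finset.mem_range.mp ha.1) (Finset.mem_range.mp hb.1)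
          ha.2.1 ha.2.2 hb.2.1 hb.2.2)
      calc Sbad.card ≤ (T1 ∪ T2).card := Finset.card_le_card hsub
        _ ≤ T1.card + T2.card := Finset.card_union_le _ _
        _ ≤ 2 := by omega
    calc ‖∑ i ∈ Sbad, (h * μA j i) • (w j i - f (P.t i))‖
        ≤ ∑ i ∈ Sbad, ‖(h * μA j i) • (w j i - f (P.t i))‖ := norm_sum_le _ _
      _ ≤ ∑ _i ∈ Sbad, (2 * B * δ) := Finset.sum_le_sum hterm
      _ = Sbad.card * (2 * B * δ) := by rw [Finset.sum_const, nsmul_eq_mul]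
      _ ≤ 2 * (2 * B * δ) := by
          apply mul_le_mul_of_nonneg_right _ (by positivity)
          exact_mod_cast hcard
  have hfinal : ‖h • (∫ θ, g θ ∂μ₀) - riemannSum f P‖ ≤ 4 * B * 2^m * δ := by
    rw [hdiff]
    calc ‖∑ j ∈ Finset.Icc 1 N, ∑ i ∈ Finset.range P.n,
          (h * μA j i) • (w j i - f (P.t i))‖
        ≤ ∑ j ∈ Finset.Icc 1 N,
            ‖∑ i ∈ Finset.range P.n, (h * μA j i) • (w j i - f (P.t i))‖ := norm_sum_le _ _
      _ ≤ ∑ _j ∈ Finset.Icc 1 N, 2 * (2*B*δ) := Finset.sum_le_sum hperj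
      _ = (N:ℝ) * (2 * (2*B*δ)) := by
          rw [Finset.sum_const, nsmul_eq_mul, Nat.card_Icc]
          simp
      _ = 4 * B * 2^m * δ := by rw [hNdef]; push_cast; ring
  have htri : x - riemannSum f P
      = (x - h • ∫ θ, g θ ∂μ₀) + (h • (∫ θ, g θ ∂μ₀) - riemannSum f P) := by abel
  rw [htri]
  exact (norm_add_le _ _).trans (add_le_add hIbound hfinal)


theorem riemann_integrable_iff_dyadic_criterion
    {X : Type*} [NormedAddCommGroup X] [NormedSpace ℝ X] [CompleteSpace X]
    (f : ℝ → X) :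
    RiemannIntegrable f ↔
      ∃ x : X, ∀ ε > (0 : ℝ), ∃ n : ℕ, ∀ m ≥ n, ∀ t : ℕ → ℝ,
        (∀ i : ℕ, 1 ≤ i → i ≤ 2 ^ m →
          t i ∈ Set.Ioo (((i : ℝ) - 1) / 2 ^ m) ((i : ℝ) / 2 ^ m)) →
        ‖x - (2 ^ m : ℝ)⁻¹ • ∑ i ∈ Finset.Icc 1 (2 ^ m), f (t i)‖ < ε := by
  constructor
  · rintro ⟨x, hx⟩
    refine ⟨x, ?_⟩
    intro ε hε
    obtain ⟨δ, hδ, hP⟩ := hx ε hε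
    obtain ⟨n, hn⟩ : ∃ n : ℕ, ((1:ℝ)/2) ^ n < δ :=
      exists_pow_lt_of_lt_one hδ (by norm_num)
    refine ⟨n, ?_⟩
    intro m hm t ht
    have hNpos : 0 < 2 ^ m := Nat.pow_pos (by norm_num)
    set Q : TaggedPartition :=
      { n := 2 ^ m
        p := fun i => (i : ℝ) / 2 ^ m
        t := fun i => t (i + 1)
        n_pos := hNpos
        p_zero := by norm_num
        p_last := by push_cast; field_simp
        p_mono := by
          intro i _
          have h2 : (0:ℝ) < 2^m := by positivity
          rw [div_lt_div_iff₀ h2 h2]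
          push_cast
          nlinarith
        t_mem := by
          intro i hi
          have := ht (i + 1) (by omega) (by omega)
          obtain ⟨h1, h2⟩ := this
          constructor
          · apply le_of_lt
            calc (i:ℝ)/2^m = (((i+1:ℕ):ℝ) - 1)/2^m := by push_cast; ring_nf
              _ < t (i+1) := h1
          · exact le_of_lt h2 } with hQ
    have hmesh : Q.MeshLt δ := by
      intro i hi
      have hstep : Q.p (i+1) - Q.p i = ((1:ℝ)/2) ^ m := by
        show ((i+1:ℕ):ℝ)/2^m - (i:ℝ)/2^m = _
        rw [div_sub_div_same]
        push_cast
        rw [add_sub_cancel_left, one_div_pow]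
      rw [hstep]
      calc ((1:ℝ)/2) ^ m ≤ ((1:ℝ)/2) ^ n :=
            pow_le_pow_of_le_one (by norm_num) (by norm_num) hm
        _ < δ := hn
    have hval := hP Q hmesh
    have hsum : riemannSum f Q = (2 ^ m : ℝ)⁻¹ • ∑ i ∈ Finset.Icc 1 (2 ^ m), f (t i) := by
      have hstep : ∀ i ∈ Finset.range (2^m),
          (Q.p (i+1) - Q.p i) • f (Q.t i) = (2 ^ m : ℝ)⁻¹ • f (t (i+1)) := by
        intro i _
        have : Q.p (i+1) - Q.p i = (2 ^ m : ℝ)⁻¹ := by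
          show ((i+1:ℕ):ℝ)/2^m - (i:ℝ)/2^m = _
          rw [div_sub_div_same]
          push_cast
          rw [add_sub_cancel_left, one_div]
        rw [this]
      rw [riemannSum]
      show ∑ i ∈ Finset.range (2^m), (Q.p (i+1) - Q.p i) • f (Q.t i) = _
      rw [Finset.sum_congr rfl hstep, ← Finset.smul_sum]
      congr 1
      rw [← Finset.Ico_add_one_right_eq_Icc, Finset.sum_Ico_eq_sum_range]
      simp only [Nat.add_sub_cancel_left, Nat.succ_sub_one, Nat.add_sub_cancel]
      exact Finset.sum_congr rfl fun i _ => by rw [Nat.add_comm]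
    rw [← hsum]
    exact hval
  · rintro ⟨x, hcrit⟩
    refine ⟨x, ?_⟩
    intro ε hε
    obtain ⟨n₁, hn₁⟩ := hcrit 1 one_pos
    obtain ⟨B, hB0, hB⟩ := bounded_of_crit f x n₁ (fun t ht => hn₁ n₁ le_rfl t ht)
    obtain ⟨n₂, hn₂⟩ := hcrit (ε/2) (by linarith)
    set C : ℝ := B * 2 ^ n₂ with hC
    have hC0 : 0 ≤ C := by positivity
    set δ : ℝ := ε / (8 * C + 1) with hδdef
    have hδpos : 0 < δ := by positivity
    refine ⟨δ, hδpos, ?_⟩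
    intro P hmesh
    have hkey := key_estimate f x B hB0 hB n₂ (ε/2) (by linarith)
      (fun t ht => hn₂ n₂ le_rfl t ht) P δ hmesh
    have hlt : 4 * B * 2 ^ n₂ * δ < ε / 2 := by
      have h8 : (0:ℝ) < 8 * C + 1 := by linarith
      have hd : ε = (8 * C + 1) * δ := by
        rw [hδdef]; field_simp
      have h4 : 4 * B * 2 ^ n₂ * δ = 4 * C * δ := by rw [hC]; ring
      rw [h4]
      nlinarith [hδpos]
    linarith
end

section
/- Let (vᵢ) be a normalized 1-spreading basic sequence. Then the normalized difference sequence wᵢ = (v_{2i} − v_{2i+1})/‖v_{2i} − v_{2i+1}‖ is K-unconditional for some constant K ≥ 1 depending only on the basis constant of (vᵢ). -/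
open Finset MeasureTheory

/-- A (normalized after adding `‖x i‖ = 1`) basic sequence, via the basis-constant inequality. -/
def IsBasicSeq {X : Type*} [NormedAddCommGroup X] [NormedSpace ℝ X] (x : ℕ → X) : Prop :=
  ∃ K : ℝ, 1 ≤ K ∧ ∀ (a : ℕ → ℝ) (n m : ℕ), n ≤ m →
    ‖∑ i ∈ Finset.range n, a i • x i‖ ≤ K * ‖∑ i ∈ Finset.range m, a i • x i‖

private lemma lemA' {V : Type*} [NormedAddCommGroup V] [NormedSpace ℝ V]
    (v : ℕ → V)
    (hspread : ∀ (n : ℕ) (a : ℕ → ℝ) (k : ℕ → ℕ), StrictMono k →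
      ‖∑ i ∈ Finset.range n, a i • v (k i)‖ = ‖∑ i ∈ Finset.range n, a i • v i‖)
    (n : ℕ) (b : ℕ → ℝ) (k : ℕ → ℕ) (hk : StrictMono k) :
    ‖∑ i ∈ Finset.range n, b i • (v (k (2 * i)) - v (k (2 * i + 1)))‖ =
    ‖∑ i ∈ Finset.range n, b i • (v (2 * i) - v (2 * i + 1))‖ := by
  set c : ℕ → ℝ := fun j => if j % 2 = 0 then b (j / 2) else -(b (j / 2)) with hc
  have regroup : ∀ (k : ℕ → ℕ) (n : ℕ),
      ∑ j ∈ Finset.range (2 * n), c j • v (k j) =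
      ∑ i ∈ Finset.range n, b i • (v (k (2 * i)) - v (k (2 * i + 1))) := by
    intro k n
    induction n with
    | zero => simp
    | succ n ih =>
      have h2 : 2 * (n + 1) = 2 * n + 1 + 1 := by ring
      rw [h2, Finset.sum_range_succ, Finset.sum_range_succ, ih, Finset.sum_range_succ]
      have e1 : c (2 * n) = b n := by
        simp only [hc]; rw [if_pos (by omega)]; congr 1; omega
      have e2 : c (2 * n + 1) = -(b n) := by
        simp only [hc]; rw [if_neg (by omega)]; congr 2; omega
      rw [e1, e2, neg_smul, smul_sub]
      abel
  calc ‖∑ i ∈ Finset.range n, b i • (v (k (2 * i)) - v (k (2 * i + 1)))‖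
      = ‖∑ j ∈ Finset.range (2 * n), c j • v (k j)‖ := by rw [regroup]
    _ = ‖∑ j ∈ Finset.range (2 * n), c j • v j‖ := hspread (2 * n) c k hk
    _ = ‖∑ i ∈ Finset.range n, b i • (v (2 * i) - v (2 * i + 1))‖ := by
        have := regroup id n
        exact congrArg norm (by simpa using this)

private lemma lemB' {V : Type*} [NormedAddCommGroup V] [NormedSpace ℝ V]
    (v : ℕ → V) (hnorm : ∀ i, ‖v i‖ = 1)
    (hspread : ∀ (n : ℕ) (a : ℕ → ℝ) (k : ℕ → ℕ), StrictMono k →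
      ‖∑ i ∈ Finset.range n, a i • v (k i)‖ = ‖∑ i ∈ Finset.range n, a i • v i‖)
    (n : ℕ) (b : ℕ → ℝ) (j : ℕ) :
    ‖∑ i ∈ Finset.range n, Function.update b j 0 i • (v (2 * i) - v (2 * i + 1))‖ ≤
    ‖∑ i ∈ Finset.range n, b i • (v (2 * i) - v (2 * i + 1))‖ := by
  by_cases hj : j < n
  · set R := ‖∑ i ∈ Finset.range n, b i • (v (2 * i) - v (2 * i + 1))‖ with hR
    set b' := Function.update b j 0 with hb'
    -- the fixed configuration for the complement
    have key : ∀ N : ℕ, 0 < N →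
        ‖∑ i ∈ Finset.range n, b' i • (v (2 * i) - v (2 * i + 1))‖ ≤ R + 2 * |b j| / N := by
      intro N hN
      set k' : ℕ → ℕ := fun x => if x < 2 * j then x else x + N with hk'def
      have hk' : StrictMono k' := by
        intro x y hxy; simp only [hk'def]; split_ifs <;> omega
      set kk : ℕ → ℕ → ℕ := fun m x =>
        if x < 2 * j then x else if x < 2 * j + 2 then x + m else x + N with hkkdef
      have hkk : ∀ m < N, StrictMono (kk m) := by
        intro m hm x y hxy; simp only [hkkdef]; split_ifs <;> omega
      set Z := ∑ i ∈ Finset.range n, b' i • (v (k' (2 * i)) - v (k' (2 * i + 1))) with hZdef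
      have hZ : ‖Z‖ = ‖∑ i ∈ Finset.range n, b' i • (v (2 * i) - v (2 * i + 1))‖ :=
        lemA' v hspread n b' k' hk'
      set S : ℕ → V := fun m =>
        ∑ i ∈ Finset.range n, b i • (v (kk m (2 * i)) - v (kk m (2 * i + 1))) with hSdef
      have hS : ∀ m < N, ‖S m‖ = R := fun m hm => lemA' v hspread n b (kk m) (hkk m hm)
      have hdecomp : ∀ m < N, S m = Z + b j • (v (2 * j + m) - v (2 * j + m + 1)) := by
        intro m hm
        have : S m - Z = b j • (v (2 * j + m) - v (2 * j + m + 1)) := by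
          rw [hSdef, hZdef, ← Finset.sum_sub_distrib]
          rw [Finset.sum_eq_single j]
          · have e1 : kk m (2 * j) = 2 * j + m := by simp only [hkkdef]; split_ifs <;> omega
            have e2 : kk m (2 * j + 1) = 2 * j + m + 1 := by
              simp only [hkkdef]; split_ifs <;> omega
            rw [e1, e2, hb', Function.update_self, zero_smul, sub_zero]
          · intro i _ hij
            have e1 : kk m (2 * i) = k' (2 * i) := by
              simp only [hkkdef, hk'def]; split_ifs <;> omega
            have e2 : kk m (2 * i + 1) = k' (2 * i + 1) := by
              simp only [hkkdef, hk'def]; split_ifs <;> omega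
            rw [e1, e2, hb', Function.update_of_ne hij, sub_self]
          · intro h; exact absurd (Finset.mem_range.mpr hj) h
        linear_combination (norm := abel) this
      have hsum : (N : ℝ) • Z = (∑ m ∈ Finset.range N, S m) - b j • (v (2 * j) - v (2 * j + N)) := by
        have tel : ∑ m ∈ Finset.range N, (v (2 * j + m) - v (2 * j + m + 1)) =
            v (2 * j) - v (2 * j + N) := by
          have := Finset.sum_range_sub' (fun m => v (2 * j + m)) N
          simpa [add_assoc] using this
        have : ∑ m ∈ Finset.range N, S m =
            N • Z + b j • (v (2 * j) - v (2 * j + N)) := by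
          rw [Finset.sum_congr rfl (fun m hm => hdecomp m (Finset.mem_range.mp hm)),
            Finset.sum_add_distrib, Finset.sum_const, Finset.card_range, ← Finset.smul_sum, tel]
        rw [Nat.cast_smul_eq_nsmul, this]; abel
      have hnormZ : (N : ℝ) * ‖Z‖ ≤ (N : ℝ) * R + 2 * |b j| := by
        have h1 : ‖(N : ℝ) • Z‖ = (N : ℝ) * ‖Z‖ := by
          rw [norm_smul, Real.norm_natCast]
        have h2 : ‖∑ m ∈ Finset.range N, S m‖ ≤ (N : ℝ) * R := by
          calc ‖∑ m ∈ Finset.range N, S m‖ ≤ ∑ m ∈ Finset.range N, ‖S m‖ :=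
                norm_sum_le _ _
            _ = ∑ m ∈ Finset.range N, R :=
                Finset.sum_congr rfl fun m hm => hS m (Finset.mem_range.mp hm)
            _ = (N : ℝ) * R := by rw [Finset.sum_const, Finset.card_range, nsmul_eq_mul]
        have h3 : ‖b j • (v (2 * j) - v (2 * j + N))‖ ≤ 2 * |b j| := by
          rw [norm_smul, Real.norm_eq_abs]
          calc |b j| * ‖v (2 * j) - v (2 * j + N)‖
              ≤ |b j| * (‖v (2 * j)‖ + ‖v (2 * j + N)‖) := by
                exact mul_le_mul_of_nonneg_left (norm_sub_le _ _) (abs_nonneg _)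
            _ = 2 * |b j| := by rw [hnorm, hnorm]; ring
        calc (N : ℝ) * ‖Z‖ = ‖(N : ℝ) • Z‖ := h1.symm
          _ ≤ ‖∑ m ∈ Finset.range N, S m‖ + ‖b j • (v (2 * j) - v (2 * j + N))‖ := by
              rw [hsum]; exact norm_sub_le _ _
          _ ≤ (N : ℝ) * R + 2 * |b j| := add_le_add h2 h3
      rw [← hZ]
      have hNpos : (0 : ℝ) < N := Nat.cast_pos.mpr hN
      have h4 : ‖Z‖ ≤ ((N : ℝ) * R + 2 * |b j|) / N := by
        rw [le_div_iff₀ hNpos]; nlinarith [hnormZ]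
      have h5 : ((N : ℝ) * R + 2 * |b j|) / N = R + 2 * |b j| / N := by
        field_simp
      rw [h5] at h4; exact h4
    -- pass to the limit
    refine le_of_forall_pos_le_add fun ε hε => ?_
    obtain ⟨N, hNgt⟩ := exists_nat_gt (2 * |b j| / ε)
    have hN0 : 0 < N := by
      by_contra h
      push_neg at h
      interval_cases N
      simp at hNgt
      nlinarith [abs_nonneg (b j), div_nonneg (by nlinarith [abs_nonneg (b j)] : (0:ℝ) ≤ 2 * |b j|) hε.le]
    have : 2 * |b j| / N < ε := by
      rw [div_lt_iff₀ (Nat.cast_pos.mpr hN0)]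
      have := (div_lt_iff₀ hε).mp hNgt
      linarith
    calc ‖∑ i ∈ Finset.range n, Function.update b j 0 i • (v (2 * i) - v (2 * i + 1))‖
        ≤ R + 2 * |b j| / N := key N hN0
      _ ≤ R + ε := by linarith
  · refine le_of_eq (congrArg norm (Finset.sum_congr rfl fun i hi => ?_))
    rw [Function.update_of_ne (by have := Finset.mem_range.mp hi; omega)]

private lemma lemC' {V : Type*} [NormedAddCommGroup V] [NormedSpace ℝ V]
    (v : ℕ → V) (hnorm : ∀ i, ‖v i‖ = 1)
    (hspread : ∀ (n : ℕ) (a : ℕ → ℝ) (k : ℕ → ℕ), StrictMono k →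
      ‖∑ i ∈ Finset.range n, a i • v (k i)‖ = ‖∑ i ∈ Finset.range n, a i • v i‖)
    (C : Finset ℕ) : ∀ (n : ℕ) (b : ℕ → ℝ),
    ‖∑ i ∈ Finset.range n, (if i ∈ C then (0:ℝ) else b i) • (v (2 * i) - v (2 * i + 1))‖ ≤
    ‖∑ i ∈ Finset.range n, b i • (v (2 * i) - v (2 * i + 1))‖ := by
  classical
  induction C using Finset.induction with
  | empty => intro n b; simp
  | insert a C ha ih =>
    intro n b
    have h1 : ∑ i ∈ Finset.range n,
        (if i ∈ insert a C then (0:ℝ) else b i) • (v (2 * i) - v (2 * i + 1)) =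
        ∑ i ∈ Finset.range n,
        Function.update (fun i => if i ∈ C then (0:ℝ) else b i) a 0 i •
          (v (2 * i) - v (2 * i + 1)) := by
      refine Finset.sum_congr rfl fun i _ => ?_
      by_cases h : i = a
      · subst h; simp
      · rw [Function.update_of_ne h]
        simp [Finset.mem_insert, h]
    rw [h1]
    exact le_trans (lemB' v hnorm hspread n _ a) (ih n b)


theorem difference_sequence_of_spreading_is_unconditional
    {V : Type*} [NormedAddCommGroup V] [NormedSpace ℝ V]
    (v : ℕ → V) (hnorm : ∀ i, ‖v i‖ = 1) (hbasic : IsBasicSeq v)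
    (hspread : ∀ (n : ℕ) (a : ℕ → ℝ) (k : ℕ → ℕ), StrictMono k →
      ‖∑ i ∈ Finset.range n, a i • v (k i)‖ = ‖∑ i ∈ Finset.range n, a i • v i‖)
    (hne : ∀ i, v (2 * i) ≠ v (2 * i + 1)) :
    ∃ K : ℝ, 1 ≤ K ∧ ∀ (n : ℕ) (a sg : ℕ → ℝ), (∀ i, sg i = 1 ∨ sg i = -1) →
      ‖∑ i ∈ Finset.range n,
          (sg i * a i) • (‖v (2 * i) - v (2 * i + 1)‖⁻¹ • (v (2 * i) - v (2 * i + 1)))‖ ≤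
        K * ‖∑ i ∈ Finset.range n,
          a i • (‖v (2 * i) - v (2 * i + 1)‖⁻¹ • (v (2 * i) - v (2 * i + 1)))‖ := by
  classical
  refine ⟨3, by norm_num, fun n a sg hsg => ?_⟩
  set b : ℕ → ℝ := fun i => a i * ‖v (2 * i) - v (2 * i + 1)‖⁻¹ with hb
  set C : Finset ℕ := (Finset.range n).filter (fun i => sg i = -1) with hC
  have hRHS : ∑ i ∈ Finset.range n,
      a i • (‖v (2 * i) - v (2 * i + 1)‖⁻¹ • (v (2 * i) - v (2 * i + 1))) =
      ∑ i ∈ Finset.range n, b i • (v (2 * i) - v (2 * i + 1)) :=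
    Finset.sum_congr rfl fun i _ => by rw [smul_smul]
  have hLHS : ∑ i ∈ Finset.range n,
      (sg i * a i) • (‖v (2 * i) - v (2 * i + 1)‖⁻¹ • (v (2 * i) - v (2 * i + 1))) =
      (2 : ℝ) • (∑ i ∈ Finset.range n,
        (if i ∈ C then (0:ℝ) else b i) • (v (2 * i) - v (2 * i + 1))) -
      ∑ i ∈ Finset.range n, b i • (v (2 * i) - v (2 * i + 1)) := by
    rw [Finset.smul_sum, ← Finset.sum_sub_distrib]
    refine Finset.sum_congr rfl fun i hi => ?_
    rw [smul_smul, smul_smul]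
    rcases hsg i with h | h
    · have hiC : i ∉ C := by
        simp only [hC, Finset.mem_filter]
        rintro ⟨-, h'⟩; rw [h] at h'; norm_num at h'
      rw [if_neg hiC, h]
      module
    · have hiC : i ∈ C := by
        simp only [hC, Finset.mem_filter]; exact ⟨hi, h⟩
      rw [if_pos hiC, h]
      module
  rw [hRHS, hLHS]
  have h2 : ‖∑ i ∈ Finset.range n,
      (if i ∈ C then (0:ℝ) else b i) • (v (2 * i) - v (2 * i + 1))‖ ≤
      ‖∑ i ∈ Finset.range n, b i • (v (2 * i) - v (2 * i + 1))‖ :=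
    lemC' v hnorm hspread C n b
  calc ‖(2:ℝ) • (∑ i ∈ Finset.range n,
          (if i ∈ C then (0:ℝ) else b i) • (v (2 * i) - v (2 * i + 1))) -
        ∑ i ∈ Finset.range n, b i • (v (2 * i) - v (2 * i + 1))‖
      ≤ ‖(2:ℝ) • (∑ i ∈ Finset.range n,
          (if i ∈ C then (0:ℝ) else b i) • (v (2 * i) - v (2 * i + 1)))‖ +
        ‖∑ i ∈ Finset.range n, b i • (v (2 * i) - v (2 * i + 1))‖ := norm_sub_le _ _
    _ ≤ 2 * ‖∑ i ∈ Finset.range n, b i • (v (2 * i) - v (2 * i + 1))‖ +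
        ‖∑ i ∈ Finset.range n, b i • (v (2 * i) - v (2 * i + 1))‖ := by
        rw [norm_smul]
        have : ‖(2:ℝ)‖ = 2 := by norm_num
        rw [this]
        gcongr
    _ = 3 * ‖∑ i ∈ Finset.range n, b i • (v (2 * i) - v (2 * i + 1))‖ := by ring
end

section
/- If X has a basis (eᵢ) and every asymptotic model of X generated by an array of normalized block bases of (eᵢ) is equivalent to the unit vector basis of ℓ₁, then (eᵢ) is a Haar-ℓ₁⁺ sequence. -/
open Finset MeasureTheory

/-- A Haar system of partitions of `ℕ`. -/
structure HaarSystem where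
  A : ℕ → ℕ → Set ℕ
  infinite : ∀ n j, j < 2 ^ n → (A n j).Infinite
  cover : ∀ n : ℕ, (⋃ j ∈ Finset.range (2 ^ n), A n j) = Set.univ
  disjoint : ∀ n j j', j < 2 ^ n → j' < 2 ^ n → j ≠ j' → A n j ∩ A n j' = ∅
  split : ∀ n j, j < 2 ^ n → A n j = A (n + 1) (2 * j) ∪ A (n + 1) (2 * j + 1)

/-- A normalized basic sequence `e` is a Haar-`ℓ₁⁺` sequence: for every Haar system of
partitions there is `C ≥ 1` with
`1/C ≤ lim_n sup { 2⁻ᵐ ‖∑_{j<2ᵐ} e_{i j}‖ : m ≥ n, 2ᵐ ≤ i j ∈ A m j }`. -/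
def IsHaarL1Plus {X : Type*} [NormedAddCommGroup X] [NormedSpace ℝ X] (e : ℕ → X) : Prop :=
  ∀ H : HaarSystem, ∃ C : ℝ, 1 ≤ C ∧ ∀ n : ℕ, ∀ ε > (0 : ℝ), ∃ m ≥ n, ∃ i : ℕ → ℕ,
    (∀ j < 2 ^ m, i j ∈ H.A m j ∧ 2 ^ m ≤ i j) ∧
    1 / C - ε < (2 ^ m : ℝ)⁻¹ * ‖∑ j ∈ Finset.range (2 ^ m), e (i j)‖

/-- `v` (a normalized basis of `V`) is an asymptotic model generated by the array `x`
(row `j` is `x j`). -/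
def GeneratesAsymptoticModel {X : Type*} [NormedAddCommGroup X] [NormedSpace ℝ X]
    (x : ℕ → ℕ → X) (V : Type*) [NormedAddCommGroup V] [NormedSpace ℝ V]
    (v : ℕ → V) : Prop :=
  ∃ δ : ℕ → ℝ, (∀ n, 0 < δ n) ∧ Antitone δ ∧ Filter.Tendsto δ Filter.atTop (nhds 0) ∧
    ∀ (n : ℕ) (i : ℕ → ℕ) (a : ℕ → ℝ),
      (∀ j < n, n ≤ i j) → (∀ j j', j < j' → j' < n → i j < i j') → (∀ j < n, |a j| ≤ 1) →
      |‖∑ j ∈ Finset.range n, a j • x j (i j)‖ - ‖∑ j ∈ Finset.range n, a j • v j‖| < δ n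

/-- `v` (a normalized basis of `V`) is a spreading model generated by the sequence `e`. -/
def GeneratesSpreadingModel {X : Type*} [NormedAddCommGroup X] [NormedSpace ℝ X]
    (e : ℕ → X) (V : Type*) [NormedAddCommGroup V] [NormedSpace ℝ V]
    (v : ℕ → V) : Prop :=
  ∃ δ : ℕ → ℝ, (∀ n, 0 < δ n) ∧ Antitone δ ∧ Filter.Tendsto δ Filter.atTop (nhds 0) ∧
    ∀ (n : ℕ) (i : ℕ → ℕ) (a : ℕ → ℝ),
      (∀ j < n, n ≤ i j) → (∀ j j', j < j' → j' < n → i j < i j') → (∀ j < n, |a j| ≤ 1) →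
      |‖∑ j ∈ Finset.range n, a j • e (i j)‖ - ‖∑ j ∈ Finset.range n, a j • v j‖| < δ n

/-- A basic sequence is equivalent to the unit vector basis of `ℓ₁`. -/
def EquivL1Basis {V : Type*} [NormedAddCommGroup V] [NormedSpace ℝ V] (v : ℕ → V) : Prop :=
  ∃ C : ℝ, 0 < C ∧ ∀ (n : ℕ) (a : ℕ → ℝ),
    (1 / C) * ∑ i ∈ Finset.range n, |a i| ≤ ‖∑ i ∈ Finset.range n, a i • v i‖ ∧
    ‖∑ i ∈ Finset.range n, a i • v i‖ ≤ C * ∑ i ∈ Finset.range n, |a i|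

/-- `b` is a Schauder basis of `X`. -/
def IsSchauderBasis {X : Type*} [NormedAddCommGroup X] [NormedSpace ℝ X] (b : ℕ → X) : Prop :=
  ∀ x : X, ∃! a : ℕ → ℝ,
    Filter.Tendsto (fun n => ∑ i ∈ Finset.range n, a i • b i) Filter.atTop (nhds x)

/-- `x` is a normalized block basis of `b`. -/
def IsNormalizedBlockBasis {X : Type*} [NormedAddCommGroup X] [NormedSpace ℝ X]
    (b : ℕ → X) (x : ℕ → X) : Prop :=
  (∀ j, ‖x j‖ = 1) ∧ ∃ F : ℕ → Finset ℕ, (∀ j, (F j).Nonempty) ∧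
    (∀ j, ∀ i ∈ F j, ∀ i' ∈ F (j + 1), i < i') ∧
    ∀ j, x j ∈ Submodule.span ℝ (b '' (F j : Set ℕ))



lemma infinitePigeon {κ : Type} [Finite κ] (g : ℕ → κ) {I : Set ℕ} (hI : I.Infinite) :
    ∃ k, {i ∈ I | g i = k}.Infinite := by
  by_contra hc
  push_neg at hc
  have : I ⊆ ⋃ k, {i ∈ I | g i = k} := fun i hi => Set.mem_iUnion.2 ⟨g i, hi, rfl⟩
  exact hI ((Set.finite_iUnion hc).subset this)

lemma ramseyTuple : ∀ (n : ℕ) {κ : Type} [Finite κ] [Nonempty κ]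
    (c : (Fin n → ℕ) → κ) (M : Set ℕ), M.Infinite →
    ∃ M', M' ⊆ M ∧ M'.Infinite ∧ ∃ k, ∀ t : Fin n → ℕ,
      StrictMono t → (∀ i, t i ∈ M') → c t = k := by
  intro n
  induction n with
  | zero =>
    intro κ _ _ c M hM
    refine ⟨M, le_refl _, hM, c (fun i => i.elim0), fun t _ _ => ?_⟩
    congr 1
    funext i; exact i.elim0
  | succ n IH =>
    intro κ _ _ c M hM
    -- one step
    have step : ∀ N : Set ℕ, N.Infinite → ∃ (a : ℕ) (N' : Set ℕ) (k : κ),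
        a ∈ N ∧ N' ⊆ N ∧ N'.Infinite ∧ (∀ x ∈ N', a < x) ∧
        ∀ t : Fin n → ℕ, StrictMono t → (∀ i, t i ∈ N') → c (Fin.cons a t) = k := by
      intro N hN
      obtain ⟨a, ha⟩ := hN.nonempty
      have hN' : (N \ Set.Iic a).Infinite := hN.diff (Set.finite_Iic a)
      obtain ⟨N', hsub, hinf, k, hk⟩ := IH (fun t => c (Fin.cons a t)) _ hN'
      exact ⟨a, N', k, ha, fun x hx => (hsub hx).1, hinf,
        fun x hx => lt_of_not_ge fun h => (hsub hx).2 h, hk⟩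
    -- iterate
    let T := {N : Set ℕ // N.Infinite}
    have next : ∀ N : T, {p : ℕ × κ × T // p.1 ∈ N.1 ∧ p.2.2.1 ⊆ N.1 ∧
        (∀ x ∈ p.2.2.1, p.1 < x) ∧
        ∀ t : Fin n → ℕ, StrictMono t → (∀ i, t i ∈ p.2.2.1) → c (Fin.cons p.1 t) = p.2.1} := by
      intro N
      choose a N' k ha hsub hinf hlt hmono using step N.1 N.2
      exact ⟨(a, k, ⟨N', hinf⟩), ha, hsub, hlt, hmono⟩
    let chain : ℕ → T := fun i => Nat.rec ⟨M, hM⟩ (fun _ N => (next N).1.2.2) i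
    let a : ℕ → ℕ := fun i => (next (chain i)).1.1
    let k : ℕ → κ := fun i => (next (chain i)).1.2.1
    have hchainsucc : ∀ i, chain (i + 1) = (next (chain i)).1.2.2 := fun i => rfl
    have hsub1 : ∀ i, (chain (i+1)).1 ⊆ (chain i).1 := fun i => (next (chain i)).2.2.1
    have hnested : ∀ i j, i ≤ j → (chain j).1 ⊆ (chain i).1 := by
      intro i j hij
      induction j with
      | zero => simp_all
      | succ j IH2 =>
        rcases Nat.lt_or_ge i (j+1) with h | h
        · exact (hsub1 j).trans (IH2 (Nat.lt_succ_iff.1 h))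
        · have : i = j + 1 := le_antisymm hij h
          subst this; exact le_refl _
    have hmem : ∀ i, a i ∈ (chain i).1 := fun i => (next (chain i)).2.1
    have hlt : ∀ i, ∀ x ∈ (chain (i+1)).1, a i < x := fun i => (next (chain i)).2.2.2.1
    have hamono : StrictMono a := by
      apply strictMono_nat_of_lt_succ
      intro i
      exact hlt i _ (hmem (i+1))
    obtain ⟨k₀, hk₀⟩ := infinitePigeon k (Set.infinite_univ (α := ℕ))
    have hIinf : {i : ℕ | k i = k₀}.Infinite := by
      have : {i ∈ Set.univ | k i = k₀} = {i : ℕ | k i = k₀} := by ext; simp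
      rwa [this] at hk₀
    refine ⟨a '' {i | k i = k₀}, ?_, hIinf.image (hamono.injective.injOn), k₀, ?_⟩
    · rintro x ⟨i, _, rfl⟩
      exact hnested 0 i (Nat.zero_le i) (hmem i)
    · intro t ht htM
      obtain ⟨i₀, hi₀, hti₀⟩ := htM 0
      have htail : ∀ j : Fin n, Fin.tail t j ∈ (chain (i₀ + 1)).1 := by
        intro j
        obtain ⟨i', hi', hti'⟩ := htM j.succ
        have h1 : a i₀ < a i' := by
          rw [hti₀, hti']
          exact ht (by simp [Fin.lt_def])
        have : i₀ < i' := hamono.lt_iff_lt.1 h1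
        rw [Fin.tail, ← hti']
        exact hnested (i₀+1) i' this (hmem i')
      have hsuccmono : StrictMono (Fin.succ : Fin n → Fin (n+1)) :=
        fun _ _ h => by simp only [Fin.lt_def, Fin.val_succ]; exact Nat.succ_lt_succ h
      have := (next (chain i₀)).2.2.2.2 (Fin.tail t) (ht.comp hsuccmono) htail
      rw [← Fin.cons_self_tail t, ← hti₀]
      exact this.trans hi₀

lemma stabilizeOne (n : ℕ) (f : (Fin n → ℕ) → ℝ) (B : ℝ) (h0 : ∀ t, 0 ≤ f t)
    (hB : ∀ t, f t ≤ B) {ε : ℝ} (hε : 0 < ε) {M : Set ℕ} (hM : M.Infinite) :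
    ∃ M', M' ⊆ M ∧ M'.Infinite ∧ ∀ t t' : Fin n → ℕ,
      StrictMono t → (∀ i, t i ∈ M') → StrictMono t' → (∀ i, t' i ∈ M') →
      |f t - f t'| ≤ ε := by
  set R : ℕ := Nat.floor (B / ε) with hR
  have hcol : ∀ t, Nat.floor (f t / ε) < R + 1 := by
    intro t
    have h : f t / ε ≤ B / ε := by
      gcongr
      exact hB t
    exact Nat.lt_succ_of_le (Nat.floor_le_floor h)
  obtain ⟨M', hsub, hinf, k, hk⟩ := ramseyTuple n
    (fun t => (⟨Nat.floor (f t / ε), hcol t⟩ : Fin (R+1))) M hM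
  refine ⟨M', hsub, hinf, fun t t' ht htM ht' ht'M => ?_⟩
  have h1 := hk t ht htM
  have h2 := hk t' ht' ht'M
  have hfl : Nat.floor (f t / ε) = Nat.floor (f t' / ε) := by
    have := h1.trans h2.symm
    exact congrArg Fin.val this
  have key : ∀ x : ℝ, 0 ≤ x → (Nat.floor x : ℝ) ≤ x ∧ x < Nat.floor x + 1 :=
    fun x hx => ⟨Nat.floor_le hx, Nat.lt_floor_add_one x⟩
  have hd1 : 0 ≤ f t / ε := div_nonneg (h0 t) hε.le
  have hd2 : 0 ≤ f t' / ε := div_nonneg (h0 t') hε.le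
  obtain ⟨l1, u1⟩ := key _ hd1
  obtain ⟨l2, u2⟩ := key _ hd2
  rw [hfl] at l1 u1
  have e1 : (f t - f t') / ε < 1 := by
    rw [sub_div]; linarith
  have e2 : (f t' - f t) / ε < 1 := by
    rw [sub_div]; linarith
  have e1' := (div_lt_one hε).1 e1
  have e2' := (div_lt_one hε).1 e2
  rw [abs_le]
  constructor <;> linarith

lemma stabilizeMany {ι : Type} (s : Finset ι) (n : ι → ℕ) (f : ∀ i : ι, (Fin (n i) → ℕ) → ℝ)
    (B : ℝ) (h0 : ∀ i t, 0 ≤ f i t) (hB : ∀ i t, f i t ≤ B) {ε : ℝ} (hε : 0 < ε)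
    {M : Set ℕ} (hM : M.Infinite) :
    ∃ M', M' ⊆ M ∧ M'.Infinite ∧ ∀ i ∈ s, ∀ t t' : Fin (n i) → ℕ,
      StrictMono t → (∀ p, t p ∈ M') → StrictMono t' → (∀ p, t' p ∈ M') →
      |f i t - f i t'| ≤ ε := by
  classical
  induction s using Finset.induction_on with
  | empty => exact ⟨M, le_refl _, hM, by simp⟩
  | insert i s hnotmem IH =>
    obtain ⟨M1, hsub1, hinf1, hstab1⟩ := IH
    obtain ⟨M2, hsub2, hinf2, hstab2⟩ := stabilizeOne (n i) (f i) B (h0 i) (hB i) hε hinf1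
    refine ⟨M2, hsub2.trans hsub1, hinf2, fun j hj t t' ht htM ht' ht'M => ?_⟩
    rcases Finset.mem_insert.1 hj with rfl | hj
    · exact hstab2 t t' ht htM ht' ht'M
    · exact hstab1 j hj t t' ht (fun p => hsub2 (htM p)) ht' (fun p => hsub2 (ht'M p))

lemma quantize (Q : ℕ) (hQ : 0 < Q) (x : ℝ) (hx : |x| ≤ 1) :
    ∃ u : Fin (2*Q+1), |x - ((u : ℕ) / Q - 1)| ≤ 1 / Q := by
  have hQR : (0:ℝ) < Q := by exact_mod_cast hQ
  have hx1 : -1 ≤ x := (abs_le.1 hx).1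
  have hx2 : x ≤ 1 := (abs_le.1 hx).2
  have hnn : 0 ≤ (x + 1) * Q := by nlinarith
  set u : ℕ := Nat.floor ((x + 1) * Q) with hu
  have hub : u ≤ 2 * Q := by
    have : ((x + 1) * Q) ≤ (2 * Q : ℕ) := by push_cast; nlinarith
    calc u ≤ Nat.floor ((2 * Q : ℕ) : ℝ) := Nat.floor_le_floor this
      _ = 2 * Q := Nat.floor_natCast _
  refine ⟨⟨u, Nat.lt_succ_of_le hub⟩, ?_⟩
  have l1 : (u : ℝ) ≤ (x + 1) * Q := Nat.floor_le hnn
  have u1 : (x + 1) * Q < u + 1 := Nat.lt_floor_add_one _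
  have key : x - ((u:ℝ)/Q - 1) = ((x+1)*Q - u)/Q := by
    field_simp; ring
  rw [key, abs_le]
  have hq1 : (0:ℝ) ≤ 1 / Q := by positivity
  constructor
  · have h2 : (0:ℝ) ≤ ((x+1)*Q - u)/Q := div_nonneg (by linarith) hQR.le
    linarith
  · gcongr
    linarith

lemma lipNorm {X : Type*} [NormedAddCommGroup X] [NormedSpace ℝ X] {k : ℕ}
    (a a' : Fin k → ℝ) (w : Fin k → X) (hw : ∀ j, ‖w j‖ = 1) :
    |‖∑ j, a j • w j‖ - ‖∑ j, a' j • w j‖| ≤ ∑ j, |a j - a' j| := by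
  refine (abs_norm_sub_norm_le _ _).trans ?_
  rw [← Finset.sum_sub_distrib]
  refine (norm_sum_le _ _).trans ?_
  apply Finset.sum_le_sum
  intro j _
  rw [← sub_smul, norm_smul, hw j, mul_one]
  exact le_refl _

lemma stage {X : Type*} [NormedAddCommGroup X] [NormedSpace ℝ X]
    (z : ℕ → ℕ → X) (hz : ∀ j i, ‖z j i‖ = 1) (n : ℕ) {ε : ℝ} (hε : 0 < ε)
    {M : Set ℕ} (hM : M.Infinite) :
    ∃ M', M' ⊆ M ∧ M'.Infinite ∧ ∀ k ≤ n, ∀ a : ℕ → ℝ, (∀ j < k, |a j| ≤ 1) →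
      ∀ t t' : Fin k → ℕ, StrictMono t → (∀ i, t i ∈ M') → StrictMono t' → (∀ i, t' i ∈ M') →
      |‖∑ j : Fin k, a j • z j (t j)‖ - ‖∑ j : Fin k, a j • z j (t' j)‖| ≤ ε := by
  classical
  obtain ⟨Q0, hQ0⟩ := exists_nat_ge (4 * n / ε)
  set Q : ℕ := Q0 + 1 with hQdef
  have hQpos : 0 < Q := Nat.succ_pos _
  have hQR : (0:ℝ) < Q := by exact_mod_cast hQpos
  have hQbig : (n:ℝ) / Q ≤ ε / 4 := by
    have h1 : 4 * (n:ℝ) / ε ≤ Q := by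
      refine hQ0.trans ?_
      rw [hQdef]; push_cast; linarith
    rw [div_le_iff₀ hε] at h1
    rw [div_le_div_iff₀ hQR (by norm_num)]
    linarith
  have coefabs : ∀ u : Fin (2*Q+1), |((u : ℕ) : ℝ)/Q - 1| ≤ 1 := by
    intro u
    have h1 : (u : ℕ) ≤ 2 * Q := Nat.lt_succ_iff.1 u.isLt
    have h2 : ((u : ℕ) : ℝ) ≤ 2 * Q := by exact_mod_cast h1
    have h3 : (0:ℝ) ≤ ((u : ℕ) : ℝ) := Nat.cast_nonneg _
    rw [abs_le]
    constructor
    · have : (0:ℝ) ≤ ((u : ℕ) : ℝ)/Q := by positivity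
      linarith
    · rw [sub_le_iff_le_add, div_le_iff₀ hQR]
      linarith
  -- the finite family to stabilize
  let ι : Type := Σ k : Fin (n+1), (Fin (k : ℕ) → Fin (2*Q+1))
  let nn : ι → ℕ := fun i => (i.1 : ℕ)
  let cf : ∀ i : ι, Fin (i.1 : ℕ) → ℝ := fun i j => ((i.2 j : ℕ) : ℝ)/Q - 1
  let f : ∀ i : ι, (Fin (nn i) → ℕ) → ℝ := fun i t => ‖∑ j : Fin (nn i), cf i j • z j (t j)‖
  have hf0 : ∀ i t, 0 ≤ f i t := fun i t => norm_nonneg _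
  have hfB : ∀ i t, f i t ≤ (n : ℝ) := by
    intro i t
    refine (norm_sum_le _ _).trans ?_
    have : ∀ j : Fin (nn i), ‖cf i j • z j (t j)‖ ≤ 1 := by
      intro j
      rw [norm_smul, hz, mul_one]
      exact coefabs _
    refine (Finset.sum_le_sum (fun j _ => this j)).trans ?_
    simp only [Finset.sum_const, Finset.card_univ, Fintype.card_fin, nsmul_eq_mul, mul_one]
    exact_mod_cast (Nat.lt_succ_iff.1 i.1.isLt)
  obtain ⟨M', hsub, hinf, hstab⟩ := stabilizeMany Finset.univ nn f (n : ℝ) hf0 hfB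
    (half_pos hε) hM
  refine ⟨M', hsub, hinf, ?_⟩
  intro k hk a ha t t' ht htM ht' ht'M
  -- quantize a
  have hquant : ∀ j : Fin k, ∃ u : Fin (2*Q+1), |a j - ((u : ℕ) / Q - 1)| ≤ 1 / Q :=
    fun j => quantize Q hQpos (a j) (ha j j.isLt)
  choose u hu using hquant
  let i : ι := ⟨⟨k, Nat.lt_succ_of_le hk⟩, u⟩
  have hlip : ∀ s : Fin k → ℕ,
      |‖∑ j : Fin k, a j • z j (s j)‖ - ‖∑ j : Fin k, cf i j • z j (s j)‖| ≤ ε / 4 := by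
    intro s
    refine (lipNorm (fun j => a j) (cf i) (fun j => z j (s j)) (fun j => hz _ _)).trans ?_
    have : ∀ j : Fin k, |a (j : ℕ) - cf i j| ≤ 1 / Q := fun j => hu j
    refine (Finset.sum_le_sum (fun j _ => this j)).trans ?_
    simp only [Finset.sum_const, Finset.card_univ, Fintype.card_fin, nsmul_eq_mul]
    calc (k : ℝ) * (1 / Q) = k / Q := by ring
      _ ≤ n / Q := by gcongr <;> exact_mod_cast hk
      _ ≤ ε / 4 := hQbig
  have hmid := hstab i (Finset.mem_univ i) t t' ht htM ht' ht'M
  have e1 := hlip t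
  have e2 := hlip t'
  have hfi : f i t = ‖∑ j : Fin k, cf i j • z j (t j)‖ := rfl
  have hfi' : f i t' = ‖∑ j : Fin k, cf i j • z j (t' j)‖ := rfl
  rw [hfi, hfi'] at hmid
  calc |‖∑ j : Fin k, a j • z j (t j)‖ - ‖∑ j : Fin k, a j • z j (t' j)‖|
      ≤ |‖∑ j : Fin k, a j • z j (t j)‖ - ‖∑ j : Fin k, cf i j • z j (t j)‖|
        + |‖∑ j : Fin k, cf i j • z j (t j)‖ - ‖∑ j : Fin k, cf i j • z j (t' j)‖|
        + |‖∑ j : Fin k, cf i j • z j (t' j)‖ - ‖∑ j : Fin k, a j • z j (t' j)‖| := by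
          have := abs_sub_le (‖∑ j : Fin k, a j • z j (t j)‖)
            (‖∑ j : Fin k, cf i j • z j (t' j)‖) (‖∑ j : Fin k, a j • z j (t' j)‖)
          have h2 := abs_sub_le (‖∑ j : Fin k, a j • z j (t j)‖)
            (‖∑ j : Fin k, cf i j • z j (t j)‖) (‖∑ j : Fin k, cf i j • z j (t' j)‖)
          linarith
    _ ≤ ε / 4 + ε / 2 + ε / 4 := by
        have e2' : |‖∑ j : Fin k, cf i j • z j (t' j)‖ - ‖∑ j : Fin k, a j • z j (t' j)‖|
            ≤ ε / 4 := by rw [abs_sub_comm]; exact e2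
        exact add_le_add (add_le_add e1 hmid) e2'
    _ = ε := by ring

lemma existsAsympSub {X : Type*} [NormedAddCommGroup X] [NormedSpace ℝ X]
    (z : ℕ → ℕ → X) (hz : ∀ j i, ‖z j i‖ = 1) :
    ∃ l : ℕ → ℕ, StrictMono l ∧ ∃ ν : (ℕ →₀ ℝ) → ℝ,
      (∀ (g : ℕ →₀ ℝ) (n : ℕ), (∀ j, n ≤ j → g j = 0) →
        Filter.Tendsto (fun N => ‖∑ j ∈ Finset.range n, g j • z j (l (N + j))‖)
          Filter.atTop (nhds (ν g))) ∧
      (∀ (g : ℕ →₀ ℝ) (n : ℕ) (t : ℕ → ℕ), (∀ j, n ≤ j → g j = 0) →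
        (∀ j < n, n ≤ t j) → (∀ j j', j < j' → j' < n → t j < t j') → (∀ j, |g j| ≤ 1) →
        |‖∑ j ∈ Finset.range n, g j • z j (l (t j))‖ - ν g| ≤ ((2:ℝ)⁻¹) ^ n) := by
  classical
  -- the chain of stabilized infinite sets
  let T := {M : Set ℕ // M.Infinite}
  let Pp : ℕ → Set ℕ → Prop := fun s M' => ∀ k ≤ s, ∀ a : ℕ → ℝ, (∀ j < k, |a j| ≤ 1) →
    ∀ t t' : Fin k → ℕ, StrictMono t → (∀ i, t i ∈ M') → StrictMono t' → (∀ i, t' i ∈ M') →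
    |‖∑ j : Fin k, a j • z j (t j)‖ - ‖∑ j : Fin k, a j • z j (t' j)‖| ≤ ((2:ℝ)⁻¹) ^ s
  have hpow : ∀ s : ℕ, (0:ℝ) < ((2:ℝ)⁻¹) ^ s := fun s => by positivity
  have next : ∀ (s : ℕ) (N : T), {N' : T // N'.1 ⊆ N.1 ∧ Pp s N'.1} := by
    intro s N
    choose M' h1 h2 h3 using stage z hz s (hpow s) N.2
    exact ⟨⟨M', h2⟩, h1, h3⟩
  let chain : ℕ → T := fun s => Nat.rec ⟨Set.univ, Set.infinite_univ⟩
    (fun s N => (next (s+1) N).1) s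
  have hchain : ∀ s, Pp s (chain s).1 := by
    intro s
    cases s with
    | zero =>
      intro k hk a ha t t' ht htM ht' ht'M
      interval_cases k
      simp
    | succ s => exact (next (s+1) (chain s)).2.2
  have hsub1 : ∀ s, (chain (s+1)).1 ⊆ (chain s).1 := fun s => (next (s+1) (chain s)).2.1
  have hnested : ∀ s s', s ≤ s' → (chain s').1 ⊆ (chain s).1 := by
    intro s s' hss
    induction s' with
    | zero => simp_all
    | succ s' IH =>
      rcases Nat.lt_or_ge s (s'+1) with h | h
      · exact (hsub1 s').trans (IH (Nat.lt_succ_iff.1 h))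
      · have : s = s' + 1 := le_antisymm hss h
        subst this; exact le_refl _
  -- the diagonal sequence
  let l : ℕ → ℕ := fun s => Nat.rec (Classical.choose (chain 0).2.nonempty)
    (fun s prev => Classical.choose ((chain (s+1)).2.exists_gt prev)) s
  have hl0 : l 0 ∈ (chain 0).1 := Classical.choose_spec (chain 0).2.nonempty
  have hlsucc : ∀ s, l (s+1) ∈ (chain (s+1)).1 ∧ l s < l (s+1) := by
    intro s
    have := Classical.choose_spec ((chain (s+1)).2.exists_gt (l s))
    exact ⟨this.1, this.2⟩
  have hlmem : ∀ s, l s ∈ (chain s).1 := by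
    intro s
    cases s with
    | zero => exact hl0
    | succ s => exact (hlsucc s).1
  have hlmono : StrictMono l := strictMono_nat_of_lt_succ (fun s => (hlsucc s).2)
  have hldeep : ∀ s i, s ≤ i → l i ∈ (chain s).1 := fun s i h => hnested s i h (hlmem i)
  -- oscillation control
  have hosc : ∀ (s k : ℕ), k ≤ s → ∀ a : ℕ → ℝ, (∀ j < k, |a j| ≤ 1) →
      ∀ t t' : Fin k → ℕ, StrictMono t → (∀ i, s ≤ t i) → StrictMono t' → (∀ i, s ≤ t' i) →
      |‖∑ j : Fin k, a j • z j (l (t j))‖ - ‖∑ j : Fin k, a j • z j (l (t' j))‖|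
        ≤ ((2:ℝ)⁻¹) ^ s := by
    intro s k hk a ha t t' ht htd ht' ht'd
    exact hchain s k hk a ha (fun j => l (t j)) (fun j => l (t' j))
      (hlmono.comp ht) (fun i => hldeep s (t i) (htd i))
      (hlmono.comp ht') (fun i => hldeep s (t' i) (ht'd i))
  -- ℕ-indexed sums
  have hfin : ∀ (a : ℕ → ℝ) (k : ℕ) (t : ℕ → ℕ),
      ∑ j ∈ Finset.range k, a j • z j (l (t j)) = ∑ j : Fin k, a j • z j (l (t j)) :=
    fun a k t => (Fin.sum_univ_eq_sum_range (fun j => a j • z j (l (t j))) k).symm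
  -- Cauchy property and limits
  have hdeg : ∀ g : ℕ →₀ ℝ, ∀ j, (g.support.sup id) + 1 ≤ j → g j = 0 := by
    intro g j hj
    by_contra hne
    have := Finset.le_sup (f := id) (Finsupp.mem_support_iff.2 hne)
    simp only [id] at this
    omega
  have hsumind : ∀ (g : ℕ →₀ ℝ) (n n' N : ℕ), (∀ j, n ≤ j → g j = 0) → n ≤ n' →
      ∑ j ∈ Finset.range n', g j • z j (l (N + j)) =
      ∑ j ∈ Finset.range n, g j • z j (l (N + j)) := by
    intro g n n' N hgn hnn
    refine (Finset.sum_subset (Finset.range_subset_range.2 hnn) ?_).symm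
    intro j _ hj
    rw [hgn j (by simpa using hj)]
    simp
  have hcauchy : ∀ g : ℕ →₀ ℝ,
      CauchySeq (fun N => ‖∑ j ∈ Finset.range ((g.support.sup id) + 1),
        g j • z j (l (N + j))‖) := by
    intro g
    set n : ℕ := (g.support.sup id) + 1 with hn
    set c : ℝ := 1 + ∑ j ∈ g.support, |g j| with hc
    have hcpos : 0 < c := by
      have : (0:ℝ) ≤ ∑ j ∈ g.support, |g j| := Finset.sum_nonneg (fun _ _ => abs_nonneg _)
      rw [hc]; linarith
    have hbd : ∀ j, |g j / c| ≤ 1 := by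
      intro j
      rw [abs_div, abs_of_pos hcpos, div_le_one hcpos]
      rcases Finset.decidableMem j g.support with hj | hj
      · rw [Finsupp.notMem_support_iff.1 hj]
        simp; linarith
      · have := Finset.single_le_sum (f := fun j => |g j|)
          (fun _ _ => abs_nonneg _) hj
        rw [hc]; linarith
    have hsc : ∀ N, ‖∑ j ∈ Finset.range n, g j • z j (l (N + j))‖
        = c * ‖∑ j ∈ Finset.range n, (g j / c) • z j (l (N + j))‖ := by
      intro N
      have he : ∑ j ∈ Finset.range n, (g j / c) • z j (l (N + j))
          = c⁻¹ • ∑ j ∈ Finset.range n, g j • z j (l (N + j)) := by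
        rw [Finset.smul_sum]
        refine Finset.sum_congr rfl (fun j _ => ?_)
        rw [smul_smul, div_eq_inv_mul]
      rw [he, norm_smul, norm_inv, Real.norm_of_nonneg hcpos.le,
        ← mul_assoc, mul_inv_cancel₀ hcpos.ne', one_mul]
    rw [Metric.cauchySeq_iff']
    intro ε hε
    have htend : Filter.Tendsto (fun s => c * ((2:ℝ)⁻¹) ^ s) Filter.atTop (nhds 0) := by
      have := tendsto_pow_atTop_nhds_zero_of_lt_one (by norm_num : (0:ℝ) ≤ 2⁻¹)
        (by norm_num : (2:ℝ)⁻¹ < 1)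
      simpa using this.const_mul c
    obtain ⟨s₀, hs₀⟩ := (Filter.tendsto_atTop'.1 htend (Set.Iio ε)
      (Iio_mem_nhds hε))
    set s : ℕ := max (max s₀ n) 1 with hs
    have hse : c * ((2:ℝ)⁻¹) ^ s < ε := hs₀ s (le_trans (le_max_left _ _) (le_max_left _ _))
    refine ⟨s, fun N hN => ?_⟩
    have hkey : ∀ N' , s ≤ N' → |‖∑ j ∈ Finset.range n, (g j / c) • z j (l (N' + j))‖
        - ‖∑ j ∈ Finset.range n, (g j / c) • z j (l (s + j))‖| ≤ ((2:ℝ)⁻¹) ^ s := by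
      intro N' hN'
      rw [hfin, hfin]
      refine hosc s n (le_trans (le_max_right _ _) (le_max_left _ _)) _
        (fun j _ => hbd j) _ _ ?_ ?_ ?_ ?_
      · intro p q hpq; simpa using hpq
      · intro i; exact le_trans hN' (Nat.le_add_right _ _)
      · intro p q hpq; simpa using hpq
      · intro i; exact Nat.le_add_right _ _
    have h1 := hkey N hN
    rw [Real.dist_eq, hsc, hsc, ← mul_sub, abs_mul, abs_of_pos hcpos]
    calc c * |‖∑ j ∈ Finset.range n, (g j / c) • z j (l (N + j))‖
        - ‖∑ j ∈ Finset.range n, (g j / c) • z j (l (s + j))‖|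
        ≤ c * ((2:ℝ)⁻¹) ^ s := by
          exact mul_le_mul_of_nonneg_left h1 hcpos.le
      _ < ε := hse
  have hlim : ∀ g : ℕ →₀ ℝ, ∃ x : ℝ,
      Filter.Tendsto (fun N => ‖∑ j ∈ Finset.range ((g.support.sup id) + 1),
        g j • z j (l (N + j))‖) Filter.atTop (nhds x) :=
    fun g => cauchySeq_tendsto_of_complete (hcauchy g)
  choose ν hν using hlim
  have bullet1 : ∀ (g : ℕ →₀ ℝ) (n : ℕ), (∀ j, n ≤ j → g j = 0) →
      Filter.Tendsto (fun N => ‖∑ j ∈ Finset.range n, g j • z j (l (N + j))‖)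
        Filter.atTop (nhds (ν g)) := by
    intro g n hgn
    have := hν g
    set n₀ : ℕ := (g.support.sup id) + 1 with hn₀
    rcases le_total n n₀ with h | h
    · have heq : ∀ N, ‖∑ j ∈ Finset.range n₀, g j • z j (l (N + j))‖
          = ‖∑ j ∈ Finset.range n, g j • z j (l (N + j))‖ := by
        intro N; rw [hsumind g n n₀ N hgn h]
      simpa [heq] using this
    · have heq : ∀ N, ‖∑ j ∈ Finset.range n₀, g j • z j (l (N + j))‖
          = ‖∑ j ∈ Finset.range n, g j • z j (l (N + j))‖ := by
        intro N; rw [hsumind g n₀ n N (hdeg g) h]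
      simpa [heq] using this
  refine ⟨l, hlmono, ν, bullet1, ?_⟩
  intro g n t hgn htlow htmono hgb
  have hosc2 : ∀ N, n ≤ N → |‖∑ j ∈ Finset.range n, g j • z j (l (t j))‖
      - ‖∑ j ∈ Finset.range n, g j • z j (l (N + j))‖| ≤ ((2:ℝ)⁻¹) ^ n := by
    intro N hN
    rw [hfin, hfin]
    refine hosc n n (le_refl n) _ (fun j _ => hgb j) _ _ ?_ ?_ ?_ ?_
    · intro p q hpq
      exact htmono p q hpq q.isLt
    · intro i; exact htlow i i.isLt
    · intro p q hpq; simpa using hpq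
    · intro i; exact le_trans hN (Nat.le_add_right _ _)
  set A : ℝ := ‖∑ j ∈ Finset.range n, g j • z j (l (t j))‖ with hA
  have htendabs : Filter.Tendsto
      (fun N => |A - ‖∑ j ∈ Finset.range n, g j • z j (l (N + j))‖|)
      Filter.atTop (nhds (|A - ν g|)) := by
    exact ((bullet1 g n hgn).const_sub A).abs
  refine le_of_tendsto htendabs ?_
  filter_upwards [Filter.eventually_ge_atTop n] with N hN
  exact hosc2 N hN

lemma existsSelector (S : ℕ → Set ℕ) (hS : ∀ e, (S e).Infinite) :
    ∃ c : ℕ → ℕ, StrictMono c ∧ ∀ e, c e ∈ S e := by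
  classical
  let c : ℕ → ℕ := fun e => Nat.rec (Classical.choose (hS 0).nonempty)
    (fun e prev => Classical.choose ((hS (e+1)).exists_gt prev)) e
  have hc0 : c 0 ∈ S 0 := Classical.choose_spec (hS 0).nonempty
  have hcs : ∀ e, c (e+1) ∈ S (e+1) ∧ c e < c (e+1) := by
    intro e
    have := Classical.choose_spec ((hS (e+1)).exists_gt (c e))
    exact ⟨this.1, this.2⟩
  refine ⟨c, strictMono_nat_of_lt_succ (fun e => (hcs e).2), fun e => ?_⟩
  cases e with
  | zero => exact hc0
  | succ e => exact (hcs e).1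

lemma coefBound {X : Type*} [NormedAddCommGroup X] [NormedSpace ℝ X] (b : ℕ → X)
    (hbn : ∀ i, ‖b i‖ = 1) (K : ℝ)
    (hK : ∀ (a : ℕ → ℝ) (n m : ℕ), n ≤ m →
      ‖∑ i ∈ Finset.range n, a i • b i‖ ≤ K * ‖∑ i ∈ Finset.range m, a i • b i‖)
    (s : Finset ℕ) (gc : ℕ → ℝ) (w : ℕ → ℕ) (hw : Set.InjOn w s)
    (j0 : ℕ) (hj0 : j0 ∈ s) :
    |gc j0| ≤ 2 * K * ‖∑ j ∈ s, gc j • b (w j)‖ := by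
  classical
  set M : ℕ := s.sup w + 1 with hM
  set a' : ℕ → ℝ := fun i => ∑ j ∈ s.filter (fun j => w j = i), gc j with ha'
  have hrearr : ∑ i ∈ Finset.range M, a' i • b i = ∑ j ∈ s, gc j • b (w j) := by
    have hmaps : ∀ j ∈ s, w j ∈ Finset.range M := by
      intro j hj
      rw [Finset.mem_range, hM]
      exact Nat.lt_succ_of_le (Finset.le_sup hj)
    calc ∑ i ∈ Finset.range M, a' i • b i
        = ∑ i ∈ Finset.range M, ∑ j ∈ s.filter (fun j => w j = i), gc j • b (w j) := by
          refine Finset.sum_congr rfl (fun i _ => ?_)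
          rw [ha', Finset.sum_smul]
          refine Finset.sum_congr rfl (fun j hj => ?_)
          rw [(Finset.mem_filter.1 hj).2]
      _ = ∑ j ∈ s, gc j • b (w j) := Finset.sum_fiberwise_of_maps_to hmaps _
  have hfilter : s.filter (fun j => w j = w j0) = {j0} := by
    ext j
    simp only [Finset.mem_filter, Finset.mem_singleton]
    constructor
    · rintro ⟨hj, he⟩
      exact hw hj hj0 he
    · rintro rfl
      exact ⟨hj0, rfl⟩
  have ha'j0 : a' (w j0) = gc j0 := by
    rw [ha']
    simp only
    rw [hfilter, Finset.sum_singleton]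
  have hsplit : ∑ i ∈ Finset.range (w j0 + 1), a' i • b i
      - ∑ i ∈ Finset.range (w j0), a' i • b i = a' (w j0) • b (w j0) := by
    rw [Finset.sum_range_succ]
    abel
  have h1 : ‖∑ i ∈ Finset.range (w j0 + 1), a' i • b i‖
      ≤ K * ‖∑ i ∈ Finset.range M, a' i • b i‖ := by
    apply hK
    rw [hM]
    exact Nat.succ_le_succ (Finset.le_sup hj0)
  have h2 : ‖∑ i ∈ Finset.range (w j0), a' i • b i‖
      ≤ K * ‖∑ i ∈ Finset.range M, a' i • b i‖ := by
    apply hK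
    rw [hM]
    exact Nat.le_succ_of_le (Finset.le_sup hj0)
  have h3 : |gc j0| = ‖a' (w j0) • b (w j0)‖ := by
    rw [norm_smul, hbn, mul_one, ha'j0, Real.norm_eq_abs]
  rw [h3, ← hsplit]
  calc ‖∑ i ∈ Finset.range (w j0 + 1), a' i • b i - ∑ i ∈ Finset.range (w j0), a' i • b i‖
      ≤ ‖∑ i ∈ Finset.range (w j0 + 1), a' i • b i‖
        + ‖∑ i ∈ Finset.range (w j0), a' i • b i‖ := norm_sub_le _ _
    _ ≤ K * ‖∑ i ∈ Finset.range M, a' i • b i‖ + K * ‖∑ i ∈ Finset.range M, a' i • b i‖ :=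
        add_le_add h1 h2
    _ = 2 * K * ‖∑ i ∈ Finset.range M, a' i • b i‖ := by ring
    _ = 2 * K * ‖∑ j ∈ s, gc j • b (w j)‖ := by rw [hrearr]

lemma finalNum (C ε q e val w : ℝ) (hC1 : 1 ≤ C) (hq : 0 < q) (hqe : q⁻¹ < ε)
    (he0 : 0 ≤ e) (he1 : e ≤ 1) (hlb : (1/C) * q ≤ w) (hdiff : -e ≤ val - w) :
    1 / C - ε < q⁻¹ * val := by
  have hv : (1/C) * q - e ≤ val := by linarith
  have hiq : (0:ℝ) ≤ q⁻¹ := inv_nonneg.2 hq.le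
  have h1 : q⁻¹ * ((1/C) * q - e) ≤ q⁻¹ * val := mul_le_mul_of_nonneg_left hv hiq
  have hqq : q⁻¹ * q = 1 := inv_mul_cancel₀ hq.ne'
  have h2 : q⁻¹ * ((1/C) * q - e) = 1/C - q⁻¹ * e := by
    calc q⁻¹ * ((1/C) * q - e) = (1/C) * (q⁻¹ * q) - q⁻¹ * e := by ring
      _ = 1/C - q⁻¹ * e := by rw [hqq, mul_one]
  have h3 : q⁻¹ * e ≤ q⁻¹ * 1 := mul_le_mul_of_nonneg_left he1 hiq
  have hqe2 : (0:ℝ) < q⁻¹ := inv_pos.2 hq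
  nlinarith

theorem haar_l1_plus_of_asymptotic_models_l1
    {X : Type*} [NormedAddCommGroup X] [NormedSpace ℝ X] [CompleteSpace X]
    (b : ℕ → X) (hbasis : IsSchauderBasis b) (hbnorm : ∀ i, ‖b i‖ = 1)
    (hbbasic : IsBasicSeq b)
    (h : ∀ x : ℕ → ℕ → X, (∀ j, IsNormalizedBlockBasis b (x j)) →
      ∀ (V : Type) [NormedAddCommGroup V] [NormedSpace ℝ V] (v : ℕ → V),
        (∀ i, ‖v i‖ = 1) → GeneratesAsymptoticModel x V v → EquivL1Basis v) :
    IsHaarL1Plus b := by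
  classical
  obtain ⟨K, hK1, hK⟩ := hbbasic
  intro H
  -- dedication of rows to Haar sets
  set d : ℕ → ℕ × ℕ := fun r => (Nat.log 2 (r+1), r + 1 - 2^(Nat.log 2 (r+1))) with hd
  have hdvalid : ∀ r, (d r).2 < 2 ^ (d r).1 := by
    intro r
    have h1 : 2 ^ Nat.log 2 (r+1) ≤ r+1 := Nat.pow_log_le_self 2 (Nat.succ_ne_zero r)
    simp only [hd]
    have h2 : r+1 < 2 ^ (Nat.log 2 (r+1) + 1) := Nat.lt_pow_succ_log_self (by norm_num) _
    rw [pow_succ] at h2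
    omega
  have hdspec : ∀ m k, k < 2^m → d (2^m - 1 + k) = (m, k) := by
    intro m k hk
    have hm1 : 1 ≤ 2^m := Nat.one_le_two_pow
    have h1 : 2^m - 1 + k + 1 = 2^m + k := by omega
    have hlog : Nat.log 2 (2^m - 1 + k + 1) = m := by
      rw [h1]
      apply Nat.log_eq_of_pow_le_of_lt_pow
      · omega
      · rw [pow_succ]; omega
    have hde : d (2^m - 1 + k)
        = (Nat.log 2 (2^m - 1 + k + 1), 2^m - 1 + k + 1 - 2^(Nat.log 2 (2^m - 1 + k + 1))) := by
      simp only [hd]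
    rw [hde, hlog, h1, Prod.mk.injEq]
    exact ⟨rfl, by omega⟩
  -- a strictly increasing selector through the dedicated sets
  set S : ℕ → Set ℕ := fun e => H.A (d (Nat.unpair e).1).1 (d (Nat.unpair e).1).2 with hS
  have hSinf : ∀ e, (S e).Infinite := fun e => H.infinite _ _ (hdvalid _)
  obtain ⟨c, hcmono, hcmem⟩ := existsSelector S hSinf
  set en : ℕ → ℕ → ℕ := fun r i => c (Nat.pair r i) with hen
  have henmono : ∀ r, StrictMono (en r) :=
    fun r p q hpq => hcmono (Nat.pair_lt_pair_right r hpq)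
  have henmem : ∀ r i, en r i ∈ H.A (d r).1 (d r).2 := by
    intro r i
    have := hcmem (Nat.pair r i)
    simpa [hS, Nat.unpair_pair] using this
  have henlarge : ∀ r i, i ≤ en r i :=
    fun r i => le_trans (Nat.right_le_pair r i) hcmono.le_apply
  have heninj : ∀ r i r' i', en r i = en r' i' → r = r' ∧ i = i' := by
    intro r i r' i' hEq
    exact Nat.pair_eq_pair.1 (hcmono.injective hEq)
  -- the array
  set z : ℕ → ℕ → X := fun r i => b (en r i) with hzdef
  have hznorm : ∀ r i, ‖z r i‖ = 1 := fun r i => hbnorm _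
  obtain ⟨l, hlmono, ν, hν1, hν2⟩ := existsAsympSub z hznorm
  set x : ℕ → ℕ → X := fun r i => z r (l i) with hx
  have hxblock : ∀ r, IsNormalizedBlockBasis b (x r) := by
    intro r
    refine ⟨fun i => hbnorm _, fun i => {en r (l i)}, fun i => ⟨_, Finset.mem_singleton_self _⟩,
      ?_, ?_⟩
    · intro i p hp q hq
      rw [Finset.mem_singleton] at hp hq
      subst hp; subst hq
      exact henmono r (hlmono (Nat.lt_succ_self i))
    · intro i
      apply Submodule.subset_span
      exact ⟨en r (l i), by simp, rfl⟩
  -- coordinates of the finsupps we build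
  have hgdef : ∀ (a : ℕ → ℝ) (n : ℕ) (j : ℕ),
      ((∑ p ∈ Finset.range n, Finsupp.single p (a p)) : ℕ →₀ ℝ) j
        = if j < n then a j else 0 := by
    intro a n j
    rw [Finsupp.finset_sum_apply]
    rcases lt_or_ge j n with hj | hj
    · rw [if_pos hj, Finset.sum_eq_single j]
      · simp [Finsupp.single_apply]
      · intro p _ hp
        simp [Finsupp.single_apply, hp]
      · intro hjj
        exact absurd (Finset.mem_range.2 hj) hjj
    · rw [if_neg (not_lt.2 hj)]
      apply Finset.sum_eq_zero
      intro p hp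
      have hpj : p ≠ j := by
        rw [Finset.mem_range] at hp; omega
      simp [Finsupp.single_apply, hpj]
  have hdegμ : ∀ g : ℕ →₀ ℝ, ∀ j, (g.support.sup id) + 1 ≤ j → g j = 0 := by
    intro g j hj
    by_contra hne
    have := Finset.le_sup (f := id) (Finsupp.mem_support_iff.2 hne)
    simp only [id] at this
    omega
  -- properties of the limit seminorm ν
  have hνzero : ν 0 = 0 := by
    have hadm : ∀ j : ℕ, 0 ≤ j → (0 : ℕ →₀ ℝ) j = 0 := fun j _ => rfl
    have h0 := hν1 0 0 hadm
    simp only [Finset.range_zero, Finset.sum_empty, norm_zero] at h0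
    exact tendsto_nhds_unique h0 tendsto_const_nhds
  have hνadd : ∀ g g' : ℕ →₀ ℝ, ν (g + g') ≤ ν g + ν g' := by
    intro g g'
    set n : ℕ := max (g.support.sup id + 1) (g'.support.sup id + 1) with hn
    have hadm1 : ∀ j, n ≤ j → g j = 0 :=
      fun j hj => hdegμ g j (le_trans (le_max_left _ _) hj)
    have hadm2 : ∀ j, n ≤ j → g' j = 0 :=
      fun j hj => hdegμ g' j (le_trans (le_max_right _ _) hj)
    have hadm3 : ∀ j, n ≤ j → (g + g') j = 0 := by
      intro j hj
      rw [Finsupp.add_apply, hadm1 j hj, hadm2 j hj, add_zero]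
    refine le_of_tendsto_of_tendsto' (hν1 (g + g') n hadm3)
      ((hν1 g n hadm1).add (hν1 g' n hadm2)) ?_
    intro N
    have he : ∑ j ∈ Finset.range n, (g + g') j • z j (l (N + j))
        = (∑ j ∈ Finset.range n, g j • z j (l (N + j)))
          + ∑ j ∈ Finset.range n, g' j • z j (l (N + j)) := by
      rw [← Finset.sum_add_distrib]
      refine Finset.sum_congr rfl (fun j _ => ?_)
      rw [Finsupp.add_apply, add_smul]
    rw [he]
    exact norm_add_le _ _
  have hνneg : ∀ g : ℕ →₀ ℝ, ν (-g) = ν g := by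
    intro g
    set n : ℕ := max (g.support.sup id + 1) ((-g).support.sup id + 1) with hn
    have hadm1 : ∀ j, n ≤ j → g j = 0 :=
      fun j hj => hdegμ g j (le_trans (le_max_left _ _) hj)
    have hadm2 : ∀ j, n ≤ j → (-g) j = 0 :=
      fun j hj => hdegμ (-g) j (le_trans (le_max_right _ _) hj)
    have he : ∀ N, ‖∑ j ∈ Finset.range n, (-g) j • z j (l (N + j))‖
        = ‖∑ j ∈ Finset.range n, g j • z j (l (N + j))‖ := by
      intro N
      have : ∑ j ∈ Finset.range n, (-g) j • z j (l (N + j))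
          = -∑ j ∈ Finset.range n, g j • z j (l (N + j)) := by
        rw [← Finset.sum_neg_distrib]
        refine Finset.sum_congr rfl (fun j _ => ?_)
        rw [Finsupp.neg_apply, neg_smul]
      rw [this, norm_neg]
    have h1 := hν1 (-g) n hadm2
    simp only [he] at h1
    exact tendsto_nhds_unique h1 (hν1 g n hadm1)
  have hνsmul : ∀ (r : ℝ) (g : ℕ →₀ ℝ), ν (r • g) = |r| * ν g := by
    intro r g
    set n : ℕ := max (g.support.sup id + 1) ((r • g).support.sup id + 1) with hn
    have hadm1 : ∀ j, n ≤ j → g j = 0 :=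
      fun j hj => hdegμ g j (le_trans (le_max_left _ _) hj)
    have hadm2 : ∀ j, n ≤ j → (r • g) j = 0 :=
      fun j hj => hdegμ (r • g) j (le_trans (le_max_right _ _) hj)
    have he : ∀ N, ‖∑ j ∈ Finset.range n, (r • g) j • z j (l (N + j))‖
        = |r| * ‖∑ j ∈ Finset.range n, g j • z j (l (N + j))‖ := by
      intro N
      have : ∑ j ∈ Finset.range n, (r • g) j • z j (l (N + j))
          = r • ∑ j ∈ Finset.range n, g j • z j (l (N + j)) := by
        rw [Finset.smul_sum]
        refine Finset.sum_congr rfl (fun j _ => ?_)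
        rw [Finsupp.smul_apply, smul_smul, smul_eq_mul]
      rw [this, norm_smul, Real.norm_eq_abs]
    have h1 := hν1 (r • g) n hadm2
    simp only [he] at h1
    exact tendsto_nhds_unique h1 ((hν1 g n hadm1).const_mul |r|)
  have hνeq0 : ∀ g : ℕ →₀ ℝ, ν g = 0 → g = 0 := by
    intro g hg0
    ext j0
    simp only [Finsupp.coe_zero, Pi.zero_apply]
    by_cases hj0 : g j0 = 0
    · exact hj0
    set n : ℕ := g.support.sup id + 1 with hn
    have hadm : ∀ j, n ≤ j → g j = 0 := hdegμ g
    have hj0n : j0 ∈ Finset.range n := by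
      rw [Finset.mem_range, hn]
      have := Finset.le_sup (f := id) (Finsupp.mem_support_iff.2 hj0)
      simp only [id] at this
      omega
    have hb : ∀ N : ℕ, |g j0| ≤ 2 * K * ‖∑ j ∈ Finset.range n, g j • z j (l (N + j))‖ := by
      intro N
      have hinj : Set.InjOn (fun j => en j (l (N + j))) (Finset.range n) := by
        intro p _ q _ hpq
        exact (heninj _ _ _ _ hpq).1
      exact coefBound b hbnorm K hK (Finset.range n) (fun j => g j)
        (fun j => en j (l (N + j))) hinj j0 hj0n
    have hle : |g j0| ≤ 2 * K * ν g := by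
      refine ge_of_tendsto ((hν1 g n hadm).const_mul (2 * K)) ?_
      filter_upwards with N
      exact hb N
    rw [hg0, mul_zero] at hle
    exact abs_eq_zero.1 (le_antisymm hle (abs_nonneg _))
  letI : NormedAddCommGroup (ℕ →₀ ℝ) := AddGroupNorm.toNormedAddCommGroup
    { toFun := ν
      map_zero' := hνzero
      add_le' := hνadd
      neg' := hνneg
      eq_zero_of_map_eq_zero' := hνeq0 }
  letI : NormedSpace ℝ (ℕ →₀ ℝ) :=
    { norm_smul_le := fun r g => le_of_eq (hνsmul r g) }
  have hnorm : ∀ g : ℕ →₀ ℝ, ‖g‖ = ν g := fun g => rfl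
  -- the asymptotic model basis
  set v : ℕ → (ℕ →₀ ℝ) := fun j => Finsupp.single j 1 with hv
  have hνsingle : ∀ j : ℕ, ν (Finsupp.single j (1:ℝ)) = 1 := by
    intro j
    have hadm : ∀ p, j + 1 ≤ p → Finsupp.single j (1:ℝ) p = 0 := by
      intro p hp
      rw [Finsupp.single_apply, if_neg (by omega)]
    have h1 := hν1 _ (j+1) hadm
    have he : ∀ N, ‖∑ p ∈ Finset.range (j+1),
        Finsupp.single j (1:ℝ) p • z p (l (N + p))‖ = 1 := by
      intro N
      rw [Finset.sum_eq_single j]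
      · rw [Finsupp.single_apply, if_pos rfl, one_smul]
        exact hznorm _ _
      · intro p _ hp
        rw [Finsupp.single_apply, if_neg (fun hq => hp hq.symm), zero_smul]
      · intro hj
        exact absurd (Finset.mem_range.2 (Nat.lt_succ_self j)) hj
    simp only [he] at h1
    exact (tendsto_nhds_unique h1 tendsto_const_nhds)
  have hvnorm : ∀ j, ‖v j‖ = 1 := fun j => by rw [hnorm, hv]; exact hνsingle j
  have hsumv : ∀ (a : ℕ → ℝ) (n : ℕ),
      (∑ j ∈ Finset.range n, a j • v j) = ∑ j ∈ Finset.range n, Finsupp.single j (a j) := by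
    intro a n
    refine Finset.sum_congr rfl (fun j _ => ?_)
    rw [hv, Finsupp.smul_single, smul_eq_mul, mul_one]
  -- the generated asymptotic model
  have hgen : GeneratesAsymptoticModel x (ℕ →₀ ℝ) v := by
    refine ⟨fun n => 2 * ((2:ℝ)⁻¹)^n, fun n => by positivity, ?_, ?_, ?_⟩
    · intro p q hpq
      have hq : ((2:ℝ)⁻¹)^q ≤ ((2:ℝ)⁻¹)^p :=
        pow_le_pow_of_le_one (by norm_num) (by norm_num) hpq
      simp only
      linarith
    · have ht := tendsto_pow_atTop_nhds_zero_of_lt_one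
        (by norm_num : (0:ℝ) ≤ 2⁻¹) (by norm_num : (2:ℝ)⁻¹ < 1)
      simpa using ht.const_mul (2:ℝ)
    · intro n i a hlow hmono hbound
      set g : ℕ →₀ ℝ := ∑ j ∈ Finset.range n, Finsupp.single j (a j) with hgg
      have hgcoord : ∀ j, g j = if j < n then a j else 0 := hgdef a n
      have hadm : ∀ j, n ≤ j → g j = 0 := fun j hj => by
        rw [hgcoord, if_neg (not_lt.2 hj)]
      have hgb : ∀ j, |g j| ≤ 1 := by
        intro j
        rw [hgcoord]
        split
        · exact hbound j ‹_›
        · simp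
      have key := hν2 g n i hadm hlow hmono hgb
      have he1 : ∑ j ∈ Finset.range n, g j • z j (l (i j))
          = ∑ j ∈ Finset.range n, a j • x j (i j) := by
        refine Finset.sum_congr rfl (fun j hj => ?_)
        rw [hgcoord, if_pos (Finset.mem_range.1 hj)]
      have he2 : ‖∑ j ∈ Finset.range n, a j • v j‖ = ν g := by
        rw [hsumv, hnorm]
      rw [he1, ← he2] at key
      have hp2 : (0:ℝ) < ((2:ℝ)⁻¹)^n := by positivity
      exact lt_of_le_of_lt key (by linarith)
  -- apply the hypothesis
  obtain ⟨C, hCpos, hCb⟩ := h x hxblock (ℕ →₀ ℝ) v hvnorm hgen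
  have hC1 : (1:ℝ) ≤ C := by
    have h2 := (hCb 1 (fun _ => 1)).2
    simp only [Finset.range_one, Finset.sum_singleton, one_smul, abs_one, mul_one] at h2
    rw [hvnorm 0] at h2
    exact h2
  refine ⟨C, hC1, ?_⟩
  intro n ε hε
  -- choose the level m
  have htend := tendsto_pow_atTop_nhds_zero_of_lt_one
    (by norm_num : (0:ℝ) ≤ 2⁻¹) (by norm_num : (2:ℝ)⁻¹ < 1)
  have hev : ∀ᶠ m : ℕ in Filter.atTop, ((2:ℝ)⁻¹)^m < ε :=
    htend.eventually_lt_const hε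
  obtain ⟨m, hm⟩ := (hev.and (Filter.eventually_ge_atTop n)).exists
  obtain ⟨hmε, hmn⟩ := hm
  refine ⟨m, hmn, ?_⟩
  set m1 : ℕ := 2^m with hm1
  have hm1pos : 1 ≤ m1 := Nat.one_le_two_pow
  set n' : ℕ := 2^(m+1) - 1 with hn'
  have hpsucc : (2:ℕ)^(m+1) = 2 * 2^m := by rw [pow_succ]; ring
  have hn'eq : n' + 1 = 2 * m1 := by omega
  have hmn' : m1 ≤ n' := by omega
  -- the coefficients and the finsupp
  set a : ℕ → ℝ := fun j => if m1 - 1 ≤ j ∧ j < n' then 1 else 0 with ha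
  set g : ℕ →₀ ℝ := ∑ j ∈ Finset.range n', Finsupp.single j (a j) with hgg
  have hgcoord : ∀ j, g j = if j < n' then a j else 0 := hgdef a n'
  have hadm : ∀ j, n' ≤ j → g j = 0 := fun j hj => by
    rw [hgcoord, if_neg (not_lt.2 hj)]
  have hgb : ∀ j, |g j| ≤ 1 := by
    intro j
    simp only [hgcoord, ha]
    split
    · split
      · simp
      · simp
    · simp
  have key := hν2 g n' (fun j => n' + j) hadm
    (fun j _ => Nat.le_add_right _ _)
    (fun p q hpq _ => by simpa using Nat.add_lt_add_left hpq n') hgb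
  -- the chosen indices
  set iv : ℕ → ℕ := fun k => en (m1 - 1 + k) (l (n' + (m1 - 1 + k))) with hiv
  -- identify the sum
  have hsum1 : ∑ j ∈ Finset.range n', g j • z j (l (n' + j))
      = ∑ k ∈ Finset.range m1, b (iv k) := by
    have hIco : Finset.Ico (m1 - 1) n' ⊆ Finset.range n' := by
      intro j hj
      rw [Finset.mem_range]
      exact (Finset.mem_Ico.1 hj).2
    have hzero : ∀ j ∈ Finset.range n', j ∉ Finset.Ico (m1 - 1) n' →
        g j • z j (l (n' + j)) = 0 := by
      intro j hj hnot
      rw [Finset.mem_range] at hj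
      rw [Finset.mem_Ico] at hnot
      have : g j = 0 := by
        rw [hgcoord, if_pos hj, ha]
        simp only
        rw [if_neg (by omega)]
      rw [this, zero_smul]
    rw [← Finset.sum_subset hIco hzero, Finset.sum_Ico_eq_sum_range]
    have hcard : n' - (m1 - 1) = m1 := by omega
    rw [hcard]
    refine Finset.sum_congr rfl (fun k hk => ?_)
    rw [Finset.mem_range] at hk
    have hgj : g (m1 - 1 + k) = 1 := by
      rw [hgcoord, if_pos (by omega), ha]
      simp only
      rw [if_pos ⟨by omega, by omega⟩]
    rw [hgj, one_smul]
  rw [hsum1] at key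
  -- ℓ₁ lower bound for ν g
  have habs : ∑ j ∈ Finset.range n', |a j| = (m1 : ℝ) := by
    have hIco : Finset.Ico (m1 - 1) n' ⊆ Finset.range n' := by
      intro j hj
      rw [Finset.mem_range]
      exact (Finset.mem_Ico.1 hj).2
    have hzero : ∀ j ∈ Finset.range n', j ∉ Finset.Ico (m1 - 1) n' → |a j| = 0 := by
      intro j hj hnot
      rw [Finset.mem_Ico] at hnot
      rw [ha]
      simp only
      rw [if_neg (by omega), abs_zero]
    rw [← Finset.sum_subset hIco hzero]
    have hone : ∀ j ∈ Finset.Ico (m1 - 1) n', |a j| = 1 := by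
      intro j hj
      rw [Finset.mem_Ico] at hj
      rw [ha]
      simp only
      rw [if_pos ⟨hj.1, hj.2⟩, abs_one]
    rw [Finset.sum_congr rfl hone, Finset.sum_const, Nat.card_Ico]
    have : n' - (m1 - 1) = m1 := by omega
    rw [this]
    simp
  have hνlb : (1 / C) * (m1 : ℝ) ≤ ν g := by
    have h1 := (hCb n' a).1
    rw [habs] at h1
    have h2 : ‖∑ j ∈ Finset.range n', a j • v j‖ = ν g := by
      rw [hsumv, hnorm]
    rw [h2] at h1
    exact h1
  refine ⟨iv, ?_, ?_⟩
  · intro k hk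
    constructor
    · have hmem := henmem (m1 - 1 + k) (l (n' + (m1 - 1 + k)))
      rw [hdspec m k hk] at hmem
      exact hmem
    · calc (2:ℕ)^m ≤ n' + (m1 - 1 + k) := by omega
        _ ≤ l (n' + (m1 - 1 + k)) := hlmono.le_apply
        _ ≤ iv k := henlarge _ _
  · -- the numerical estimate
    have hd := (abs_le.1 key).1
    have hq : (0:ℝ) < (2:ℝ)^m := by positivity
    have hqe : ((2:ℝ)^m)⁻¹ < ε := by
      rw [inv_pow] at hmε
      exact hmε
    have hcast : ((m1 : ℕ) : ℝ) = (2:ℝ)^m := by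
      rw [hm1]
      push_cast
      ring
    rw [hcast] at hνlb
    have he0 : (0:ℝ) ≤ ((2:ℝ)⁻¹)^n' := by positivity
    have he1 : ((2:ℝ)⁻¹)^n' ≤ 1 := by
      apply pow_le_one₀ <;> norm_num
    exact finalNum C ε ((2:ℝ)^m) (((2:ℝ)⁻¹)^n')
      (‖∑ k ∈ Finset.range m1, b (iv k)‖) (ν g) hC1 hq hqe he0 he1 hνlb hd
end

section
/- For functions g₁, …, gₙ ∈ L₁[0,1], the average over all sign choices of ‖Σᵢ εᵢ gᵢ‖₁ is at least a universal constant times ‖(Σᵢ |gᵢ|²)^{1/2}‖₁; in particular max over signs εᵢ ∈ {±1} of ‖Σᵢ εᵢ gᵢ‖₁ ≥ c ‖(Σᵢ |gᵢ|²)^{1/2}‖₁ for some universal c > 0. -/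
open Finset MeasureTheory

private lemma kh_split (n : ℕ) (a : Fin (n + 1) → ℝ) (F : ℝ → ℝ) :
    ∑ sg : Fin (n + 1) → Bool, F (∑ i, (if sg i then (1:ℝ) else -1) * a i)
      = ∑ g : Fin n → Bool,
        (F (a 0 + ∑ i, (if g i then (1:ℝ) else -1) * a i.succ)
          + F (-a 0 + ∑ i, (if g i then (1:ℝ) else -1) * a i.succ)) := by
  rw [← Equiv.sum_comp (Fin.consEquiv fun _ : Fin (n+1) => Bool)
    (fun sg => F (∑ i, (if sg i then (1:ℝ) else -1) * a i)), Fintype.sum_prod_type,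
    Finset.sum_comm]
  refine Finset.sum_congr rfl fun g _ => ?_
  rw [Fintype.sum_bool]
  simp [Fin.consEquiv, Fin.sum_univ_succ, Fin.cons_zero, Fin.cons_succ]

private lemma kh_sum_sq (n : ℕ) (a : Fin n → ℝ) :
    ∑ sg : Fin n → Bool, (∑ i, (if sg i then (1:ℝ) else -1) * a i) ^ 2
      = 2 ^ n * ∑ i, a i ^ 2 := by
  induction n with
  | zero => simp
  | succ n ih =>
    rw [kh_split n a (fun x => x ^ 2)]
    have h : ∀ g : Fin n → Bool,
        (a 0 + ∑ i, (if g i then (1:ℝ) else -1) * a i.succ) ^ 2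
          + (-a 0 + ∑ i, (if g i then (1:ℝ) else -1) * a i.succ) ^ 2
        = 2 * a 0 ^ 2 + 2 * (∑ i, (if g i then (1:ℝ) else -1) * a i.succ) ^ 2 := by
      intro g; ring
    rw [Finset.sum_congr rfl fun g _ => h g, Finset.sum_add_distrib, Finset.sum_const,
      ← Finset.mul_sum, ih (fun i => a i.succ)]
    have hcard : (Finset.univ : Finset (Fin n → Bool)).card = 2 ^ n := by simp
    rw [hcard, Fin.sum_univ_succ (fun i => a i ^ 2)]
    push_cast
    ring

private lemma kh_sum_four (n : ℕ) (a : Fin n → ℝ) :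
    ∑ sg : Fin n → Bool, (∑ i, (if sg i then (1:ℝ) else -1) * a i) ^ 4
      ≤ 3 * 2 ^ n * (∑ i, a i ^ 2) ^ 2 := by
  induction n with
  | zero => simp
  | succ n ih =>
    rw [kh_split n a (fun x => x ^ 4)]
    have h : ∀ g : Fin n → Bool,
        (a 0 + ∑ i, (if g i then (1:ℝ) else -1) * a i.succ) ^ 4
          + (-a 0 + ∑ i, (if g i then (1:ℝ) else -1) * a i.succ) ^ 4
        = 2 * a 0 ^ 4 + 12 * a 0 ^ 2 * (∑ i, (if g i then (1:ℝ) else -1) * a i.succ) ^ 2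
          + 2 * (∑ i, (if g i then (1:ℝ) else -1) * a i.succ) ^ 4 := by
      intro g; ring
    rw [Finset.sum_congr rfl fun g _ => h g]
    rw [Finset.sum_add_distrib, Finset.sum_add_distrib, Finset.sum_const, ← Finset.mul_sum,
      ← Finset.mul_sum, kh_sum_sq n (fun i => a i.succ)]
    have hcard : (Finset.univ : Finset (Fin n → Bool)).card = 2 ^ n := by simp
    rw [hcard]
    have h4 := ih (fun i => a i.succ)
    have hS' : (0:ℝ) ≤ ∑ i : Fin n, a i.succ ^ 2 :=
      Finset.sum_nonneg fun i _ => sq_nonneg _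
    rw [Fin.sum_univ_succ (fun i => a i ^ 2)]
    simp only [nsmul_eq_mul]
    push_cast
    have hp : (0:ℝ) ≤ 2 ^ n * a 0 ^ 4 := by positivity
    have expand : 3 * (2:ℝ) ^ (n + 1) * (a 0 ^ 2 + ∑ i : Fin n, a i.succ ^ 2) ^ 2
        = 6 * 2 ^ n * a 0 ^ 4 + 12 * a 0 ^ 2 * (2 ^ n * ∑ i : Fin n, a i.succ ^ 2)
          + 2 * (3 * 2 ^ n * (∑ i : Fin n, a i.succ ^ 2) ^ 2) := by ring
    rw [expand]
    linarith [h4, hp]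

private lemma kh_pointwise (n : ℕ) (a : Fin n → ℝ) :
    (Real.sqrt 3)⁻¹ * Real.sqrt (∑ i, a i ^ 2)
      ≤ ((2:ℝ) ^ n)⁻¹ * ∑ sg : Fin n → Bool, |∑ i, (if sg i then (1:ℝ) else -1) * a i| := by
  set X : (Fin n → Bool) → ℝ := fun sg => ∑ i, (if sg i then (1:ℝ) else -1) * a i with hXdef
  set S : ℝ := ∑ i, a i ^ 2 with hSdef
  have hS : 0 ≤ S := Finset.sum_nonneg fun i _ => sq_nonneg _
  set s : ℝ := Real.sqrt S with hsdef
  have hs : 0 ≤ s := Real.sqrt_nonneg _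
  have hs2 : s ^ 2 = S := Real.sq_sqrt hS
  set P : ℝ := ∑ sg : Fin n → Bool, |X sg| with hPdef
  have hP : 0 ≤ P := Finset.sum_nonneg fun sg _ => abs_nonneg _
  set M : ℝ := (2:ℝ) ^ n with hMdef
  have hM : 0 < M := by positivity
  set u : ℝ := Real.sqrt 3 with hudef
  have hu : 0 < u := Real.sqrt_pos.mpr (by norm_num)
  have hu2 : u ^ 2 = 3 := Real.sq_sqrt (by norm_num)
  -- second moment
  have hQ : ∑ sg : Fin n → Bool, (X sg) ^ 2 = M * s ^ 2 := by
    rw [hs2]; exact kh_sum_sq n a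
  -- fourth moment
  have hT : ∑ sg : Fin n → Bool, (X sg) ^ 4 ≤ 3 * M * (s ^ 2) ^ 2 := by
    rw [hs2]; exact kh_sum_four n a
  set R : ℝ := ∑ sg : Fin n → Bool, |X sg| ^ 3 with hRdef
  have hR : 0 ≤ R := Finset.sum_nonneg fun sg _ => by positivity
  -- Cauchy–Schwarz 1 : (∑ X²)² ≤ P * R
  have cs1 : (M * s ^ 2) ^ 2 ≤ P * R := by
    rw [← hQ]
    have := Finset.sum_mul_sq_le_sq_mul_sq Finset.univ
      (fun sg => Real.sqrt |X sg|) (fun sg => Real.sqrt |X sg| * |X sg|)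
    calc (∑ sg : Fin n → Bool, (X sg) ^ 2) ^ 2
        = (∑ sg : Fin n → Bool, Real.sqrt |X sg| * (Real.sqrt |X sg| * |X sg|)) ^ 2 := by
          congr 1; refine Finset.sum_congr rfl fun sg _ => ?_
          rw [← mul_assoc, Real.mul_self_sqrt (abs_nonneg _), ← sq_abs, sq]
      _ ≤ (∑ sg : Fin n → Bool, Real.sqrt |X sg| ^ 2)
            * ∑ sg : Fin n → Bool, (Real.sqrt |X sg| * |X sg|) ^ 2 := this
      _ = P * R := by
          congr 1
          · exact Finset.sum_congr rfl fun sg _ => Real.sq_sqrt (abs_nonneg _)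
          · refine Finset.sum_congr rfl fun sg _ => ?_
            rw [mul_pow, Real.sq_sqrt (abs_nonneg _)]
            ring
  -- Cauchy–Schwarz 2 : R² ≤ (∑ X²)(∑ X⁴)
  have cs2 : R ^ 2 ≤ (M * s ^ 2) * (3 * M * (s ^ 2) ^ 2) := by
    have h := Finset.sum_mul_sq_le_sq_mul_sq Finset.univ
      (fun sg => |X sg|) (fun sg => (X sg) ^ 2)
    have hR' : R = ∑ sg : Fin n → Bool, |X sg| * (X sg) ^ 2 := by
      refine Finset.sum_congr rfl fun sg _ => ?_
      rw [← sq_abs]; ring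
    calc R ^ 2 = (∑ sg : Fin n → Bool, |X sg| * (X sg) ^ 2) ^ 2 := by rw [hR']
      _ ≤ (∑ sg : Fin n → Bool, |X sg| ^ 2) * ∑ sg : Fin n → Bool, ((X sg) ^ 2) ^ 2 := h
      _ = (∑ sg : Fin n → Bool, (X sg) ^ 2) * ∑ sg : Fin n → Bool, (X sg) ^ 4 := by
          congr 1
          · exact Finset.sum_congr rfl fun sg _ => sq_abs _
          · exact Finset.sum_congr rfl fun sg _ => by ring
      _ ≤ (M * s ^ 2) * (3 * M * (s ^ 2) ^ 2) := by
          rw [hQ]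
          exact mul_le_mul_of_nonneg_left hT (by positivity)
  -- conclude : M * s ≤ u * P, then divide
  rw [inv_mul_eq_div, inv_mul_eq_div, div_le_div_iff₀ hu hM]
  rcases eq_or_lt_of_le hs with hse | hsp
  · rw [← hse, zero_mul]; exact mul_nonneg hP hu.le
  have hRle : R ≤ u * M * s ^ 3 := by
    have h1 : R ^ 2 ≤ (u * M * s ^ 3) ^ 2 := by nlinarith
    have h2 : 0 ≤ u * M * s ^ 3 := by positivity
    nlinarith
  have key : (s * M) * (M * s ^ 3) ≤ (P * u) * (M * s ^ 3) := by nlinarith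
  exact le_of_mul_le_mul_right key (by positivity)

/-- Lebesgue measure restricted to `[0,1]`. -/
noncomputable def μ01 : MeasureTheory.Measure ℝ :=
  MeasureTheory.volume.restrict (Set.Icc (0 : ℝ) 1)

theorem khintchine_square_function_lower_bound :
    ∃ c : ℝ, 0 < c ∧ ∀ (n : ℕ) (g : Fin n → ℝ → ℝ),
      (∀ i, MeasureTheory.Integrable (g i) μ01) →
      (c * ∫ t, Real.sqrt (∑ i, (g i t) ^ 2) ∂μ01 ≤
        ((2 : ℝ) ^ n)⁻¹ * ∑ sg : Fin n → Bool,
          ∫ t, |∑ i, (if sg i then (1 : ℝ) else -1) * g i t| ∂μ01) ∧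
      ∃ sg : Fin n → Bool,
        c * ∫ t, Real.sqrt (∑ i, (g i t) ^ 2) ∂μ01 ≤
          ∫ t, |∑ i, (if sg i then (1 : ℝ) else -1) * g i t| ∂μ01 := by
  refine ⟨(Real.sqrt 3)⁻¹, by positivity, fun n g hg => ?_⟩
  set c : ℝ := (Real.sqrt 3)⁻¹ with hc
  -- integrability facts
  have hX : ∀ sg : Fin n → Bool,
      Integrable (fun t => ∑ i, (if sg i then (1:ℝ) else -1) * g i t) μ01 :=
    fun sg => integrable_finset_sum _ fun i _ => (hg i).const_mul _
  have habs : ∀ sg : Fin n → Bool,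
      Integrable (fun t => |∑ i, (if sg i then (1:ℝ) else -1) * g i t|) μ01 :=
    fun sg => (hX sg).abs
  have hmeas : AEStronglyMeasurable (fun t => Real.sqrt (∑ i, g i t ^ 2)) μ01 := by
    have h1 : AEStronglyMeasurable (fun t => ∑ i, g i t ^ 2) μ01 :=
      Finset.aestronglyMeasurable_fun_sum _ fun i _ =>
        ((hg i).aestronglyMeasurable.mul (hg i).aestronglyMeasurable).congr
          (Filter.Eventually.of_forall fun t => (sq (g i t)).symm)
    exact Real.continuous_sqrt.comp_aestronglyMeasurable h1
  have hbound : ∀ t, Real.sqrt (∑ i, g i t ^ 2) ≤ ∑ i, |g i t| := by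
    intro t
    have h1 : ∑ i, g i t ^ 2 ≤ (∑ i, |g i t|) ^ 2 := by
      calc ∑ i, g i t ^ 2 = ∑ i, |g i t| ^ 2 := by
            exact Finset.sum_congr rfl fun i _ => (sq_abs _).symm
        _ ≤ (∑ i, |g i t|) ^ 2 :=
            Finset.sum_sq_le_sq_sum_of_nonneg fun i _ => abs_nonneg _
    calc Real.sqrt (∑ i, g i t ^ 2) ≤ Real.sqrt ((∑ i, |g i t|) ^ 2) :=
          Real.sqrt_le_sqrt h1
      _ = ∑ i, |g i t| := Real.sqrt_sq (Finset.sum_nonneg fun i _ => abs_nonneg _)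
  have hsqrtInt : Integrable (fun t => Real.sqrt (∑ i, g i t ^ 2)) μ01 := by
    have hI : Integrable (fun t => ∑ i : Fin n, |g i t|) μ01 :=
      integrable_finset_sum _ fun i _ => (hg i).abs
    refine Integrable.mono' hI hmeas ?_
    refine Filter.Eventually.of_forall fun t => ?_
    rw [Real.norm_eq_abs, abs_of_nonneg (Real.sqrt_nonneg _)]
    exact hbound t
  -- main inequality
  have key : c * ∫ t, Real.sqrt (∑ i, g i t ^ 2) ∂μ01 ≤
      ((2:ℝ) ^ n)⁻¹ * ∑ sg : Fin n → Bool,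
        ∫ t, |∑ i, (if sg i then (1:ℝ) else -1) * g i t| ∂μ01 := by
    calc c * ∫ t, Real.sqrt (∑ i, g i t ^ 2) ∂μ01
        = ∫ t, c * Real.sqrt (∑ i, g i t ^ 2) ∂μ01 :=
          (integral_const_mul c _).symm
      _ ≤ ∫ t, ((2:ℝ) ^ n)⁻¹ * ∑ sg : Fin n → Bool,
            |∑ i, (if sg i then (1:ℝ) else -1) * g i t| ∂μ01 := by
          refine integral_mono (hsqrtInt.const_mul c)
            ((integrable_finset_sum _ fun sg _ => habs sg).const_mul _) ?_
          intro t
          exact kh_pointwise n (fun i => g i t)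
      _ = ((2:ℝ) ^ n)⁻¹ * ∑ sg : Fin n → Bool,
            ∫ t, |∑ i, (if sg i then (1:ℝ) else -1) * g i t| ∂μ01 := by
          rw [integral_const_mul, integral_finset_sum _ fun sg _ => habs sg]
  refine ⟨key, ?_⟩
  -- existence of a good sign pattern
  have hcard : (Finset.univ : Finset (Fin n → Bool)).card = 2 ^ n := by simp
  have hsum : ∑ _sg : Fin n → Bool, (c * ∫ t, Real.sqrt (∑ i, g i t ^ 2) ∂μ01)
      ≤ ∑ sg : Fin n → Bool,
          ∫ t, |∑ i, (if sg i then (1:ℝ) else -1) * g i t| ∂μ01 := by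
    rw [Finset.sum_const, hcard, nsmul_eq_mul]
    push_cast
    have h2 : (0:ℝ) < 2 ^ n := by positivity
    have h3 := mul_le_mul_of_nonneg_left key h2.le
    have h4 : ((2:ℝ) ^ n) * (((2:ℝ) ^ n)⁻¹ * ∑ sg : Fin n → Bool,
        ∫ t, |∑ i, (if sg i then (1:ℝ) else -1) * g i t| ∂μ01)
        = ∑ sg : Fin n → Bool,
            ∫ t, |∑ i, (if sg i then (1:ℝ) else -1) * g i t| ∂μ01 := by
      field_simp
    rw [h4] at h3
    linarith [h3]
  obtain ⟨sg, -, hsg⟩ := Finset.exists_le_of_sum_le Finset.univ_nonempty hsum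
  exact ⟨sg, hsg⟩
end
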